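/- arXiv:1205.4525 — 3 statements merged into one kernel-verified Lean document; each statement's English description precedes it below -/
import Mathlib

section
/- Let τ ∈ ℂ with Im τ > 0. Then the theta constants satisfy Jacobi's identity θ₂(0,τ)⁴ + θ₄(0,τ)⁴ = θ₃(0,τ)⁴. -/
open Complex

/-- The Jacobi theta function `θ₁(z,τ) = −i·∑_{n∈ℤ}(−1)ⁿ q^{(n+1/2)²} e^{(2n+1)iπz}`
with `q = exp(iπτ)`, the power `q^{(n+1/2)²}` meaning `exp(iπτ(n+1/2)²)`. -/
noncomputable def jTheta₁ (z τ : ℂ) : ℂ :=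
  ∑' n : ℤ, -Complex.I * (-1 : ℂ) ^ n *
    Complex.exp (Real.pi * Complex.I * (τ * ((n : ℂ) + 1/2) ^ 2 + (2 * (n : ℂ) + 1) * z))

/-- The Jacobi theta function `θ₂(z,τ) = ∑_{n∈ℤ} q^{(n+1/2)²} e^{(2n+1)iπz}`. -/
noncomputable def jTheta₂ (z τ : ℂ) : ℂ :=
  ∑' n : ℤ,
    Complex.exp (Real.pi * Complex.I * (τ * ((n : ℂ) + 1/2) ^ 2 + (2 * (n : ℂ) + 1) * z))

/-- The Jacobi theta function `θ₃(z,τ) = ∑_{n∈ℤ} q^{n²} e^{2niπz}`. -/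
noncomputable def jTheta₃ (z τ : ℂ) : ℂ :=
  ∑' n : ℤ,
    Complex.exp (Real.pi * Complex.I * (τ * (n : ℂ) ^ 2 + 2 * (n : ℂ) * z))

/-- The Jacobi theta function `θ₄(z,τ) = ∑_{n∈ℤ}(−1)ⁿ q^{n²} e^{2niπz}`. -/
noncomputable def jTheta₄ (z τ : ℂ) : ℂ :=
  ∑' n : ℤ, (-1 : ℂ) ^ n *
    Complex.exp (Real.pi * Complex.I * (τ * (n : ℂ) ^ 2 + 2 * (n : ℂ) * z))

namespace JacobiAux

noncomputable def f2 (τ : ℂ) (n : ℤ) : ℂ :=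
  Complex.exp (Real.pi * Complex.I * (τ * ((n : ℂ) + 1/2) ^ 2))

noncomputable def f3 (τ : ℂ) (n : ℤ) : ℂ :=
  Complex.exp (Real.pi * Complex.I * (τ * (n : ℂ) ^ 2))

noncomputable def f4 (τ : ℂ) (n : ℤ) : ℂ := (-1 : ℂ) ^ n * f3 τ n

variable {τ : ℂ}

lemma summable_f3 (hτ : 0 < τ.im) : Summable (f3 τ) := by
  have := (summable_jacobiTheta₂_term_iff 0 τ).mpr hτ
  refine this.congr fun n => ?_
  simp only [jacobiTheta₂_term, f3, mul_zero, zero_add]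
  ring_nf

lemma summable_f4 (hτ : 0 < τ.im) : Summable (f4 τ) := by
  have := (summable_jacobiTheta₂_term_iff (1/2) τ).mpr hτ
  refine this.congr fun n => ?_
  simp only [jacobiTheta₂_term, f4, f3]
  have : (2 : ℂ) * Real.pi * Complex.I * n * (1/2) + Real.pi * Complex.I * n ^ 2 * τ
      = (n : ℂ) * (Real.pi * Complex.I) + Real.pi * Complex.I * (τ * (n : ℂ) ^ 2) := by ring
  rw [this, Complex.exp_add, Complex.exp_int_mul, Complex.exp_pi_mul_I]

lemma summable_f2 (hτ : 0 < τ.im) : Summable (f2 τ) := by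
  have := ((summable_jacobiTheta₂_term_iff (τ/2) τ).mpr hτ).mul_left
    (Complex.exp (Real.pi * Complex.I * (τ / 4)))
  refine this.congr fun n => ?_
  simp only [jacobiTheta₂_term, f2]
  rw [← Complex.exp_add]
  congr 1
  ring

/-- index type -/
abbrev I4 := ℤ × ℤ × ℤ × ℤ

def pr (f : ℤ → ℂ) (v : I4) : ℂ := f v.1 * (f v.2.1 * (f v.2.2.1 * f v.2.2.2))

lemma summable_norm_pr {f : ℤ → ℂ} (hf : Summable f) :
    Summable fun v : I4 => ‖pr f v‖ := by
  have h2 : Summable fun v : ℤ × ℤ => ‖f v.1 * f v.2‖ := hf.norm.mul_norm hf.norm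
  have h3 : Summable fun v : ℤ × ℤ × ℤ => ‖f v.1 * (f v.2.1 * f v.2.2)‖ :=
    Summable.mul_norm (f := f) (g := fun v : ℤ × ℤ => f v.1 * f v.2) hf.norm h2
  exact Summable.mul_norm (f := f) (g := fun v : ℤ × ℤ × ℤ => f v.1 * (f v.2.1 * f v.2.2))
    hf.norm h3

lemma summable_pr {f : ℤ → ℂ} (hf : Summable f) : Summable (pr f) :=
  summable_norm_iff.mp (summable_norm_pr hf)

lemma tsum_pow4 {f : ℤ → ℂ} (hf : Summable f) :
    (∑' n, f n) ^ 4 = ∑' v : I4, pr f v := by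
  have h2 : Summable fun v : ℤ × ℤ => ‖f v.1 * f v.2‖ := hf.norm.mul_norm hf.norm
  have h3 : Summable fun v : ℤ × ℤ × ℤ => ‖f v.1 * (f v.2.1 * f v.2.2)‖ :=
    Summable.mul_norm (f := f) (g := fun v : ℤ × ℤ => f v.1 * f v.2) hf.norm h2
  have e1 : (∑' n, f n) * (∑' n, f n) = ∑' v : ℤ × ℤ, f v.1 * f v.2 :=
    tsum_mul_tsum_of_summable_norm hf.norm hf.norm
  have e2 : (∑' n, f n) * (∑' v : ℤ × ℤ, f v.1 * f v.2)
      = ∑' v : ℤ × ℤ × ℤ, f v.1 * (f v.2.1 * f v.2.2) :=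
    tsum_mul_tsum_of_summable_norm (f := f) (g := fun v : ℤ × ℤ => f v.1 * f v.2) hf.norm h2
  have e3 : (∑' n, f n) * (∑' v : ℤ × ℤ × ℤ, f v.1 * (f v.2.1 * f v.2.2))
      = ∑' v : I4, pr f v :=
    tsum_mul_tsum_of_summable_norm (f := f)
      (g := fun v : ℤ × ℤ × ℤ => f v.1 * (f v.2.1 * f v.2.2)) hf.norm h3
  calc (∑' n, f n) ^ 4 = (∑' n, f n) * ((∑' n, f n) * ((∑' n, f n) * (∑' n, f n))) := by ring
    _ = ∑' v : I4, pr f v := by rw [e1, e2, e3]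

def σ (v : I4) : ℤ := v.1 + v.2.1 + v.2.2.1 + v.2.2.2

def φ (w : I4) : I4 := (w.1, w.2.1, w.2.2.1, w.1 + w.2.1 + w.2.2.1 + 1 + 2 * w.2.2.2)

def ψ (w : I4) : I4 :=
  (w.1 + w.2.1 + w.2.2.1 + w.2.2.2, -w.2.2.1 - w.2.2.2 - 1,
    -w.2.1 - w.2.2.2 - 1, w.1 + w.2.2.2)

def ψ' (w : I4) : I4 :=
  (-1 - (w.1 + w.2.1 + w.2.2.1 + w.2.2.2), -w.2.2.1 - w.2.2.2 - 1,
    -w.2.1 - w.2.2.2 - 1, w.1 + w.2.2.2)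

lemma φ_inj : Function.Injective φ := by
  rintro ⟨a, b, c, d⟩ ⟨a', b', c', d'⟩ h
  simp only [φ, Prod.mk.injEq] at h
  simp only [Prod.mk.injEq]
  omega

lemma ψ_inj : Function.Injective ψ := by
  rintro ⟨a, b, c, d⟩ ⟨a', b', c', d'⟩ h
  simp only [ψ, Prod.mk.injEq] at h
  simp only [Prod.mk.injEq]
  omega

lemma ψ'_inj : Function.Injective ψ' := by
  rintro ⟨a, b, c, d⟩ ⟨a', b', c', d'⟩ h
  simp only [ψ', Prod.mk.injEq] at h
  simp only [Prod.mk.injEq]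
  omega

lemma range_φ : Set.range φ = {v : I4 | Odd (σ v)} := by
  ext ⟨a, b, c, d⟩
  simp only [Set.mem_range, Set.mem_setOf_eq, σ, φ, Prod.mk.injEq, Prod.exists]
  constructor
  · rintro ⟨p, q, r, n, hp, hq, hr, hd⟩
    exact ⟨p + q + r + n, by omega⟩
  · rintro ⟨k, hk⟩
    exact ⟨a, b, c, k - a - b - c, rfl, rfl, rfl, by omega⟩

lemma range_ψ : Set.range ψ = {v : I4 | Even (σ v)} := by
  ext ⟨a, b, c, d⟩
  simp only [Set.mem_range, Set.mem_setOf_eq, σ, ψ, Prod.mk.injEq, Prod.exists]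
  constructor
  · rintro ⟨p, q, r, n, hp, hq, hr, hd⟩
    exact ⟨p - 1, by omega⟩
  · rintro ⟨k, hk⟩
    exact ⟨k + 1, k - c - d, k - b - d, d - k - 1, by omega, by omega, by omega, by omega⟩

lemma range_ψ' : Set.range ψ' = {v : I4 | Odd (σ v)} := by
  ext ⟨a, b, c, d⟩
  simp only [Set.mem_range, Set.mem_setOf_eq, σ, ψ', Prod.mk.injEq, Prod.exists]
  constructor
  · rintro ⟨p, q, r, n, hp, hq, hr, hd⟩
    exact ⟨-(q + r + n) - 2, by omega⟩
  · rintro ⟨k, hk⟩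
    exact ⟨d - k + b + c, b - k - 1, c - k - 1, k - b - c, by omega, by omega, by omega, by omega⟩

lemma pr_f4_eq (v : I4) : pr (f4 τ) v = (-1 : ℂ) ^ σ v * pr (f3 τ) v := by
  obtain ⟨a, b, c, d⟩ := v
  simp only [pr, f4, σ]
  have : ((-1 : ℂ)) ^ (a + b + c + d) = (-1 : ℂ) ^ a * (-1 : ℂ) ^ b * (-1 : ℂ) ^ c *
      (-1 : ℂ) ^ d := by
    rw [zpow_add₀ (by norm_num : (-1 : ℂ) ≠ 0), zpow_add₀ (by norm_num : (-1 : ℂ) ≠ 0),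
      zpow_add₀ (by norm_num : (-1 : ℂ) ≠ 0)]
  rw [this]; ring

lemma pr_f2_ψ (w : I4) : pr (f2 τ) (ψ w) = pr (f3 τ) (φ w) := by
  obtain ⟨p, q, r, n⟩ := w
  simp only [pr, f2, f3, ψ, φ]
  rw [← Complex.exp_add, ← Complex.exp_add, ← Complex.exp_add,
    ← Complex.exp_add, ← Complex.exp_add, ← Complex.exp_add]
  congr 1
  push_cast
  ring

lemma pr_f2_ψ' (w : I4) : pr (f2 τ) (ψ' w) = pr (f2 τ) (ψ w) := by
  obtain ⟨p, q, r, n⟩ := w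
  simp only [pr, f2, ψ, ψ']
  congr 2
  push_cast
  ring

lemma odd_σ_φ (w : I4) : Odd (σ (φ w)) := by
  obtain ⟨p, q, r, n⟩ := w
  simp only [σ, φ]
  exact ⟨p + q + r + n, by ring⟩

lemma key (hτ : 0 < τ.im) :
    (∑' n, f2 τ n) ^ 4 + (∑' n, f4 τ n) ^ 4 = (∑' n, f3 τ n) ^ 4 := by
  have s2 := summable_f2 hτ
  have s3 := summable_f3 hτ
  have s4 := summable_f4 hτ
  rw [tsum_pow4 s2, tsum_pow4 s3, tsum_pow4 s4]
  -- it suffices to show ∑ pr f2 = ∑ (pr f3 - pr f4)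
  have hdiff : (∑' v : I4, (pr (f3 τ) v - pr (f4 τ) v))
      = ∑' v : I4, pr (f3 τ) v - ∑' v : I4, pr (f4 τ) v :=
    Summable.tsum_sub (summable_pr s3) (summable_pr s4)
  have main : ∑' v : I4, pr (f2 τ) v = ∑' v : I4, (pr (f3 τ) v - pr (f4 τ) v) := by
    -- RHS via φ
    have hsupp : Function.support (fun v : I4 => pr (f3 τ) v - pr (f4 τ) v)
        ⊆ Set.range φ := by
      intro v hv
      rw [range_φ]
      rcases Int.even_or_odd (σ v) with he | ho
      · exfalso
        apply hv
        simp only [pr_f4_eq, he.neg_one_zpow, one_mul, sub_self]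
      · exact ho
    have hR : (∑' v : I4, (pr (f3 τ) v - pr (f4 τ) v))
        = ∑' w : I4, (pr (f3 τ) (φ w) - pr (f4 τ) (φ w)) :=
      (φ_inj.tsum_eq hsupp).symm
    have hR2 : (∑' w : I4, (pr (f3 τ) (φ w) - pr (f4 τ) (φ w)))
        = ∑' w : I4, (2 : ℂ) * pr (f3 τ) (φ w) := by
      refine tsum_congr fun w => ?_
      rw [pr_f4_eq, (odd_σ_φ w).neg_one_zpow]
      ring
    -- LHS via even/odd split
    have hsplit : (∑' v : {v : I4 | Even (σ v)}, pr (f2 τ) v)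
        + (∑' v : ↑{v : I4 | Even (σ v)}ᶜ, pr (f2 τ) v) = ∑' v : I4, pr (f2 τ) v :=
      Summable.tsum_add_tsum_compl ((summable_pr s2).subtype _) ((summable_pr s2).subtype _)
    have hcompl : ({v : I4 | Even (σ v)}ᶜ : Set I4) = {v : I4 | Odd (σ v)} := by
      ext v
      simp [Int.not_even_iff_odd]
    have hE : (∑' v : {v : I4 | Even (σ v)}, pr (f2 τ) v) = ∑' w : I4, pr (f2 τ) (ψ w) := by
      rw [← range_ψ]
      exact tsum_range (fun v : I4 => pr (f2 τ) v) ψ_inj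
    have hO : (∑' v : ↑{v : I4 | Even (σ v)}ᶜ, pr (f2 τ) v) = ∑' w : I4, pr (f2 τ) (ψ w) := by
      rw [hcompl, ← range_ψ']
      rw [tsum_range (fun v : I4 => pr (f2 τ) v) ψ'_inj]
      exact tsum_congr fun w => pr_f2_ψ' w
    rw [← hsplit, hE, hO, hR, hR2]
    rw [tsum_mul_left]
    have : (∑' w : I4, pr (f2 τ) (ψ w)) = ∑' w : I4, pr (f3 τ) (φ w) :=
      tsum_congr fun w => pr_f2_ψ w
    rw [this]
    ring
  rw [main, hdiff]
  ring

end JacobiAux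

/-- Jacobi's identity between theta constants:
`θ₂(0,τ)⁴ + θ₄(0,τ)⁴ = θ₃(0,τ)⁴`. -/
theorem jacobi_identity (τ : ℂ) (hτ : 0 < τ.im) :
    jTheta₂ 0 τ ^ 4 + jTheta₄ 0 τ ^ 4 = jTheta₃ 0 τ ^ 4 := by
  have h2 : jTheta₂ 0 τ = ∑' n : ℤ, JacobiAux.f2 τ n := by
    unfold jTheta₂ JacobiAux.f2
    exact tsum_congr fun n => by rw [mul_zero, add_zero]
  have h3 : jTheta₃ 0 τ = ∑' n : ℤ, JacobiAux.f3 τ n := by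
    unfold jTheta₃ JacobiAux.f3
    exact tsum_congr fun n => by rw [mul_zero, add_zero]
  have h4 : jTheta₄ 0 τ = ∑' n : ℤ, JacobiAux.f4 τ n := by
    unfold jTheta₄ JacobiAux.f4 JacobiAux.f3
    exact tsum_congr fun n => by rw [mul_zero, add_zero]
  rw [h2, h3, h4]
  exact JacobiAux.key hτ
end

section
/- Let τ ∈ ℂ with Im τ > 0 and set q̃ = exp(2iπτ). Then the infinite product ∏_{n=1}^∞ (1 − q̃^n) converges and the theta constants satisfy (θ₂(0,τ)·θ₃(0,τ)·θ₄(0,τ))⁸ = 2⁸·q̃·∏_{n=1}^∞ (1 − q̃^n)^{24}; in other words |θ₂(0,τ)θ₃(0,τ)θ₄(0,τ)|⁸ = 2⁸·|Δ(τ)| where Δ(τ) = q̃·∏_{n=1}^∞(1 − q̃^n)^{24} is the modular discriminant. -/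
open Complex Filter Finset Topology

namespace ThetaAux

/-- Summability of logs of `1 + a n` for summable `a`. -/
lemma summable_log_one_add {a : ℕ → ℂ} (hs : Summable a) :
    Summable (fun n => Complex.log (1 + a n)) := by
  obtain ⟨n0, hn0⟩ := Metric.tendsto_atTop.mp hs.tendsto_atTop_zero (1/2) one_half_pos
  rw [← summable_nat_add_iff n0]
  refine Summable.of_norm_bounded (g := fun n => (3/2) * ‖a (n + n0)‖)
    ((summable_norm_iff.mpr ((summable_nat_add_iff n0).mpr hs)).mul_left _) (fun n => ?_)
  have h : ‖a (n + n0)‖ ≤ 1/2 := by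
    have := hn0 (n + n0) (Nat.le_add_left _ _)
    rw [dist_eq_norm, sub_zero] at this
    exact this.le
  exact Complex.norm_log_one_add_half_le_self h

lemma multipliable_one_add {a : ℕ → ℂ} (hs : Summable a) (h1 : ∀ n, 1 + a n ≠ 0) :
    Multipliable (fun n => 1 + a n) :=
  Complex.multipliable_of_summable_log (summable_log_one_add hs)

lemma tprod_one_add_ne_zero {a : ℕ → ℂ} (hs : Summable a) (h1 : ∀ n, 1 + a n ≠ 0) :
    (∏' n, (1 + a n)) ≠ 0 := by
  have := Complex.cexp_tsum_eq_tprod (f := fun n => 1 + a n) h1 (summable_log_one_add hs)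
  rw [← this]
  exact Complex.exp_ne_zero _

lemma summable_nat_aux {r : ℝ} (hr0 : 0 < r) (hr : r < 1) {v : ℝ} (hv : 0 < v) :
    Summable (fun n : ℕ => r ^ (n ^ 2) * v ^ n) := by
  apply summable_of_ratio_test_tendsto_lt_one one_pos
  · filter_upwards with n
    positivity
  · have hr2 : r ^ 2 < 1 := by nlinarith
    have h1 : Tendsto (fun n : ℕ => (r ^ 2) ^ n * (r * v)) atTop (𝓝 0) := by
      simpa using (tendsto_pow_atTop_nhds_zero_of_lt_one (by positivity) hr2).mul_const (r * v)
    refine h1.congr (fun n => ?_)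
    rw [Real.norm_of_nonneg (by positivity), Real.norm_of_nonneg (by positivity),
      show (n+1)^2 = n^2 + (2*n+1) from by ring, pow_add]
    rw [eq_div_iff (by positivity)]
    ring

/-- Summability of `r^(m^2) * u^m` over `ℤ`. -/
lemma summable_aux {r u : ℝ} (hr0 : 0 < r) (hr : r < 1) (hu : 0 < u) :
    Summable (fun m : ℤ => r ^ (m ^ 2) * u ^ m) := by
  apply Summable.of_nat_of_neg_add_one
  · refine (summable_nat_aux hr0 hr hu).congr (fun n => ?_)
    rw [show ((n : ℤ)^2) = ((n^2 : ℕ) : ℤ) from by push_cast; ring, zpow_natCast,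
      show ((n : ℤ)) = ((n : ℕ) : ℤ) from rfl, zpow_natCast]
  · have h := (summable_nat_add_iff 1).mpr (summable_nat_aux hr0 hr (inv_pos.mpr hu))
    refine h.congr (fun n => ?_)
    rw [show (-((n:ℤ)+1))^2 = (((n+1)^2 : ℕ) : ℤ) from by push_cast; ring, zpow_natCast]
    rw [zpow_neg, show ((n:ℤ)+1) = (((n+1 : ℕ)) : ℤ) from by push_cast; ring, zpow_natCast, ← inv_pow]

open Complex Filter Finset Topology



lemma aux_alg (A B C u v s : ℂ) (hB : B ≠ 0) (hC : C ≠ 0) (hu : 1-u ≠ 0) (hus : 1-u*s ≠ 0)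
    (hv : 1-v ≠ 0) (hvs : 1-v*s ≠ 0) :
    A*(1-u*v*s)*(1-u*v*s*s) / (B*(1-v)*(1-v*s) * (C*(1-u)*(1-u*s))) =
    (1+u*v*s) * (A/(B*(1-v)*(C*(1-u)))) + u*s*(A/(B*(C*(1-u)*(1-u*s))))
      + v*s*(A/(B*(1-v)*(1-v*s)*C)) := by
  have hD1 : B*(1-v)*(C*(1-u)) ≠ 0 := mul_ne_zero (mul_ne_zero hB hv) (mul_ne_zero hC hu)
  have hD2 : B*(C*(1-u)*(1-u*s)) ≠ 0 := mul_ne_zero hB (mul_ne_zero (mul_ne_zero hC hu) hus)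
  have hD3 : B*(1-v)*(1-v*s)*C ≠ 0 := mul_ne_zero (mul_ne_zero (mul_ne_zero hB hv) hvs) hC
  have hD0 : B*(1-v)*(1-v*s) * (C*(1-u)*(1-u*s)) ≠ 0 :=
    mul_ne_zero (mul_ne_zero (mul_ne_zero hB hv) hvs) (mul_ne_zero (mul_ne_zero hC hu) hus)
  simp only [← mul_div_assoc]
  rw [div_add_div _ _ hD1 hD2, div_add_div _ _ (mul_ne_zero hD1 hD2) hD3,
    div_eq_div_iff hD0 (mul_ne_zero (mul_ne_zero hD1 hD2) hD3)]
  ring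

lemma aux_alg2 (A a d : ℂ) (hA : A ≠ 0) (ha : 1-a ≠ 0) (had : 1-a*d ≠ 0) (hd : 1-d ≠ 0) :
    A*(1-a)*(1-a*d)*(1-a*d*d) / (A*(1-a)*(1-a*d) * (1-d)) =
    (1+a*d) * (A*(1-a)/(A*(1-a)*1)) + d * (A*(1-a)/(A*(1-d))) := by
  have h1 : A*(1-a)*(1-a*d) * (1-d) ≠ 0 :=
    mul_ne_zero (mul_ne_zero (mul_ne_zero hA ha) had) hd
  have h2 : A*(1-a)*1 ≠ 0 := by simpa using mul_ne_zero hA ha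
  have h3 : A*(1-d) ≠ 0 := mul_ne_zero hA hd
  simp only [← mul_div_assoc]
  rw [div_add_div _ _ h2 h3, div_eq_div_iff h1 (mul_ne_zero h2 h3)]
  ring

noncomputable def P (q : ℂ) (N : ℕ) : ℂ := ∏ i ∈ Finset.range N, (1 - q ^ (2*i + 2))

variable {q : ℂ}

lemma one_sub_pow_ne_zero (hq : ‖q‖ < 1) {j : ℕ} (hj : j ≠ 0) : 1 - q ^ j ≠ 0 := by
  rw [sub_ne_zero]
  intro h
  have : ‖q ^ j‖ < 1 := by
    rw [norm_pow]
    exact pow_lt_one₀ (norm_nonneg q) hq hj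
  rw [← h] at this
  simp at this

lemma P_ne_zero (hq : ‖q‖ < 1) (N : ℕ) : P q N ≠ 0 :=
  Finset.prod_ne_zero_iff.mpr (fun i _ => one_sub_pow_ne_zero hq (by omega))

lemma P_zero : P q 0 = 1 := by simp [P]

lemma P_succ (N : ℕ) : P q (N+1) = P q N * (1 - q ^ (2*N + 2)) := Finset.prod_range_succ _ _

noncomputable def G (q : ℂ) (N : ℕ) (m : ℤ) : ℂ :=
  if |m| ≤ (N:ℤ) then P q (2*N) / (P q ((N:ℤ) + m).toNat * P q ((N:ℤ) - m).toNat) else 0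

lemma G_symm (N : ℕ) (m : ℤ) : G q N (-m) = G q N m := by
  unfold G
  rw [abs_neg, show (N:ℤ) + -m = N - m from by ring, show (N:ℤ) - -m = N + m from by ring,
    mul_comm (P q ((N:ℤ) - m).toNat)]

lemma G_zero (N : ℕ) {m : ℤ} (h : (N:ℤ) < |m|) : G q N m = 0 := if_neg (not_le.mpr h)

lemma G_eval (N : ℕ) (m : ℤ) (a b : ℕ) (ha : (a:ℤ) = N + m) (hb : (b:ℤ) = N - m) :
    G q N m = P q (2*N) / (P q a * P q b) := by
  unfold G
  rw [if_pos (by rw [abs_le]; omega), show ((N:ℤ) + m).toNat = a from by omega,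
    show ((N:ℤ) - m).toNat = b from by omega]

set_option maxHeartbeats 2000000 in
lemma G_rec (hq : ‖q‖ < 1) (N : ℕ) (m : ℤ) :
    G q (N+1) m = (1 + q^(4*N+2)) * G q N m
      + q ^ (2*((N:ℤ) + 1 - m)) * G q N (m - 1) + q ^ (2*((N:ℤ) + 1 + m)) * G q N (m + 1) := by
  suffices H : ∀ m : ℤ, 0 ≤ m → G q (N+1) m = (1 + q^(4*N+2)) * G q N m
      + q ^ (2*((N:ℤ) + 1 - m)) * G q N (m - 1) + q ^ (2*((N:ℤ) + 1 + m)) * G q N (m + 1) by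
    rcases le_or_gt 0 m with hm | hm
    · exact H m hm
    · have h2 := H (-m) (by omega)
      rw [show (-m : ℤ) - 1 = -(m+1) from by ring, show (-m : ℤ) + 1 = -(m-1) from by ring] at h2
      simp only [G_symm] at h2
      rw [h2]; ring
  intro m hm
  lift m to ℕ using hm
  have hP : ∀ n : ℕ, P q n ≠ 0 := P_ne_zero hq
  rcases Nat.lt_or_ge m N with h | h
  · -- interior case
    obtain ⟨k, rfl⟩ : ∃ k, N = m + k + 1 := ⟨N - m - 1, by omega⟩
    rw [G_eval (m+k+1+1) m (2*m+k+2) (k+2) (by push_cast; ring) (by push_cast; ring),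
      G_eval (m+k+1) m (2*m+k+1) (k+1) (by push_cast; ring) (by push_cast; ring),
      G_eval (m+k+1) ((m:ℤ)-1) (2*m+k) (k+2) (by push_cast; ring) (by push_cast; ring),
      G_eval (m+k+1) ((m:ℤ)+1) (2*m+k+2) k (by push_cast; ring) (by push_cast; ring),
      show 2 * (((m+k+1 : ℕ):ℤ) + 1 - (m:ℕ)) = ((2*k+4 : ℕ) : ℤ) from by push_cast; ring,
      zpow_natCast,
      show 2 * (((m+k+1 : ℕ):ℤ) + 1 + (m:ℕ)) = ((4*m+2*k+4 : ℕ) : ℤ) from by push_cast; ring,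
      zpow_natCast]
    have e1 : P q (2*(m+k+1+1)) = P q (2*(m+k+1)) * (1 - q^(4*m+4*k+6)) * (1 - q^(4*m+4*k+8)) := by
      rw [show 2*(m+k+1+1) = (2*(m+k+1)+1)+1 from by ring, P_succ, P_succ]; ring
    have e2 : P q (2*m+k+2) = P q (2*m+k) * (1 - q^(4*m+2*k+2)) * (1 - q^(4*m+2*k+4)) := by
      rw [show 2*m+k+2 = (2*m+k+1)+1 from by ring, P_succ, P_succ]; ring
    have e4 : P q (2*m+k+1) = P q (2*m+k) * (1 - q^(4*m+2*k+2)) := by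
      rw [P_succ]; ring
    have e5 : P q (k+2) = P q k * (1 - q^(2*k+2)) * (1 - q^(2*k+4)) := by
      rw [show k+2 = (k+1)+1 from by ring, P_succ, P_succ]; ring
    have e6 : P q (k+1) = P q k * (1 - q^(2*k+2)) := by rw [P_succ]
    have n1 : P q (2*(m+k+1)) ≠ 0 := hP _
    have n2 : P q (2*m+k) ≠ 0 := hP _
    have n3 : P q k ≠ 0 := hP _
    have n4 : (1 - q^(4*m+2*k+2)) ≠ 0 := one_sub_pow_ne_zero hq (by omega)
    have n5 : (1 - q^(4*m+2*k+4)) ≠ 0 := one_sub_pow_ne_zero hq (by omega)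
    have n6 : (1 - q^(2*k+2)) ≠ 0 := one_sub_pow_ne_zero hq (by omega)
    have n7 : (1 - q^(2*k+4)) ≠ 0 := one_sub_pow_ne_zero hq (by omega)
    rw [e1, e2, e4, e5, e6]
    have n5' : (1 - q^(4*m+2*k+2)*q^2) ≠ 0 := by
      rwa [show q^(4*m+2*k+2)*q^2 = q^(4*m+2*k+4) from by rw [← pow_add]]
    have n7' : (1 - q^(2*k+2)*q^2) ≠ 0 := by
      rwa [show q^(2*k+2)*q^2 = q^(2*k+4) from by rw [← pow_add]]
    linear_combination aux_alg (P q (2*(m+k+1))) (P q (2*m+k)) (P q k)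
      (q^(2*k+2)) (q^(4*m+2*k+2)) (q^2) n2 n3 n6 n7' n4 n5' 
  · rcases Nat.lt_or_ge m (N+1) with h1 | h1
    · -- m = N
      obtain rfl : N = m := by omega
      clear h h1
      rcases N with _ | K
      · -- N = 0, m = 0
        norm_num
        rw [G_eval 1 0 1 1 (by norm_num) (by norm_num),
          G_eval 0 0 0 0 (by norm_num) (by norm_num),
          G_zero 0 (m := (-1:ℤ)) (by norm_num), G_zero 0 (m := (1:ℤ)) (by norm_num),
          show 2*1 = 2 from rfl, show 2*0 = 0 from rfl]
        have E1 : P q 1 = 1 - q^2 := by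
          have := P_succ (q := q) 0
          rw [P_zero] at this
          simpa using this
        have E2 : P q 2 = (1 - q^2) * (1 - q^4) := by
          have := P_succ (q := q) 1
          rw [E1] at this
          simpa using this
        have n2 : (1 - q^2 : ℂ) ≠ 0 := one_sub_pow_ne_zero hq (by omega)
        rw [E2, E1, P_zero, div_eq_iff (mul_ne_zero n2 n2)]
        ring
      · -- N = K+1, m = N
        push_cast
        rw [G_eval (K+1+1) ((K:ℤ)+1) (2*K+3) 1 (by push_cast; ring) (by push_cast; ring),
          G_eval (K+1) ((K:ℤ)+1) (2*K+2) 0 (by push_cast; ring) (by push_cast; ring),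
          G_eval (K+1) ((K:ℤ)+1-1) (2*K+1) 1 (by push_cast; ring) (by push_cast; ring),
          G_zero (K+1) (m := (K:ℤ)+1+1) (by rw [_root_.abs_of_nonneg (by positivity)]; push_cast; omega),
          show 2 * ((K:ℤ) + 1 + 1 - ((K:ℤ)+1)) = ((2 : ℕ) : ℤ) from by push_cast; ring,
          zpow_natCast]
        have e1 : P q (2*(K+1+1)) = P q (2*K+1) * (1 - q^(4*K+4)) * (1 - q^(4*K+6))
            * (1 - q^(4*K+8)) := by
          rw [show 2*(K+1+1) = ((2*K+1)+1+1)+1 from by ring, P_succ, P_succ, P_succ]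
          ring
        have e2 : P q (2*K+3) = P q (2*K+1) * (1 - q^(4*K+4)) * (1 - q^(4*K+6)) := by
          rw [show 2*K+3 = ((2*K+1)+1)+1 from by ring, P_succ, P_succ]
          ring
        have e3 : P q (2*K+2) = P q (2*K+1) * (1 - q^(4*K+4)) := by
          rw [show 2*K+2 = (2*K+1)+1 from by ring, P_succ]
          ring
        have e3' : P q (2*(K+1)) = P q (2*K+1) * (1 - q^(4*K+4)) := by
          rw [show 2*(K+1) = (2*K+1)+1 from by ring, P_succ]
          ring
        have e4 : P q 1 = 1 - q^2 := by
          have := P_succ (q := q) 0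
          rw [P_zero] at this
          simpa using this
        have n1 : P q (2*K+1) ≠ 0 := hP _
        have n2 : (1 - q^(4*K+4)) ≠ 0 := one_sub_pow_ne_zero hq (by omega)
        have n3 : (1 - q^(4*K+4)*q^2) ≠ 0 := by
          rw [show q^(4*K+4)*q^2 = q^(4*K+6) from by rw [← pow_add]]
          exact one_sub_pow_ne_zero hq (by omega)
        have n4 : (1 - q^2 : ℂ) ≠ 0 := one_sub_pow_ne_zero hq (by omega)
        rw [e1, e2, e3, e3', e4, P_zero]
        linear_combination aux_alg2 (P q (2*K+1)) (q^(4*K+4)) (q^2) n1 n2 n3 n4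
    · rcases Nat.lt_or_ge m (N+2) with h2 | h2
      · -- m = N+1
        obtain rfl : m = N+1 := by omega
        push_cast
        rw [G_eval (N+1) ((N:ℤ)+1) (2*N+2) 0 (by push_cast; ring) (by push_cast; ring),
          G_eval N ((N:ℤ)+1-1) (2*N) 0 (by push_cast; ring) (by push_cast; ring),
          G_zero N (m := (N:ℤ)+1) (by rw [_root_.abs_of_nonneg (by positivity)]; push_cast; omega),
          G_zero N (m := (N:ℤ)+1+1) (by rw [_root_.abs_of_nonneg (by positivity)]; push_cast; omega),
          show 2 * ((N:ℤ) + 1 - ((N:ℤ)+1)) = ((0 : ℕ) : ℤ) from by push_cast; ring,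
          zpow_natCast]
        have n1 : P q (2*(N+1)) ≠ 0 := hP _
        have n2 : P q (2*N) ≠ 0 := hP _
        rw [P_zero, show 2*N+2 = 2*(N+1) from by ring, pow_zero]
        rw [mul_one, div_self n1, mul_one, div_self n2]
        ring
      · -- m ≥ N+2 : everything vanishes
        push_cast
        rw [G_zero (N+1) (m := ((m:ℕ):ℤ)) (by rw [_root_.abs_of_nonneg (by positivity)]; push_cast; omega),
          G_zero N (m := ((m:ℕ):ℤ)) (by rw [_root_.abs_of_nonneg (by positivity)]; push_cast; omega),
          G_zero N (m := ((m:ℕ):ℤ)-1) (by rw [_root_.abs_of_nonneg (by omega)]; push_cast; omega),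
          G_zero N (m := ((m:ℕ):ℤ)+1) (by rw [_root_.abs_of_nonneg (by positivity)]; push_cast; omega)]
        ring



noncomputable def FF (q w : ℂ) (N : ℕ) : ℂ := ∑' m : ℤ, G q N m * (q ^ (m^2) * w ^ m)

variable {w : ℂ}

lemma term_summable (N : ℕ) (c : ℤ → ℂ) : Summable (fun m : ℤ => G q N m * c m) := by
  refine summable_of_ne_finset_zero (s := Finset.Icc (-(N:ℤ)) N) (fun m hm => ?_)
  rw [Finset.mem_Icc] at hm
  rw [G_zero _ (by rw [lt_abs]; omega), zero_mul]

lemma FF_zero : FF q w 0 = 1 := by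
  unfold FF
  rw [tsum_eq_single 0 (fun m hm => by
    rw [G_zero 0 (by simpa using hm), zero_mul])]
  simp [G, P_zero]

lemma FF_succ (hq : ‖q‖ < 1) (hq0 : q ≠ 0) (hw0 : w ≠ 0) (N : ℕ) :
    FF q w (N+1) = FF q w N * ((1 + q^(2*N+1) * w) * (1 + q^(2*N+1) * w⁻¹)) := by
  have hA : Summable (fun m : ℤ => (1 + q^(4*N+2)) * (G q N m * (q ^ (m^2) * w ^ m))) :=
    (term_summable N _).mul_left _
  have hB : Summable (fun m : ℤ => q^(2*((N:ℤ)+1-m)) * G q N (m-1) * (q ^ (m^2) * w ^ m)) := by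
    refine summable_of_ne_finset_zero (s := Finset.Icc (-(N:ℤ)-1) (N+1)) (fun m hm => ?_)
    rw [Finset.mem_Icc] at hm
    rw [G_zero _ (by rw [lt_abs]; omega), mul_zero, zero_mul]
  have hC : Summable (fun m : ℤ => q^(2*((N:ℤ)+1+m)) * G q N (m+1) * (q ^ (m^2) * w ^ m)) := by
    refine summable_of_ne_finset_zero (s := Finset.Icc (-(N:ℤ)-1) (N+1)) (fun m hm => ?_)
    rw [Finset.mem_Icc] at hm
    rw [G_zero _ (by rw [lt_abs]; omega), mul_zero, zero_mul]
  have step1 : FF q w (N+1) = ∑' m : ℤ,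
      ((1 + q^(4*N+2)) * (G q N m * (q ^ (m^2) * w ^ m))
        + (q^(2*((N:ℤ)+1-m)) * G q N (m-1) * (q ^ (m^2) * w ^ m)
          + q^(2*((N:ℤ)+1+m)) * G q N (m+1) * (q ^ (m^2) * w ^ m))) := by
    refine tsum_congr (fun m => ?_)
    rw [G_rec hq]
    ring
  rw [step1, Summable.tsum_add hA (hB.add hC), Summable.tsum_add hB hC, tsum_mul_left]
  have eB : ∑' m : ℤ, q^(2*((N:ℤ)+1-m)) * G q N (m-1) * (q ^ (m^2) * w ^ m)
      = (q^(2*N+1) * w) * ∑' m : ℤ, G q N m * (q ^ (m^2) * w ^ m) := by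
    rw [← Equiv.tsum_eq (Equiv.addRight (1:ℤ))
      (fun m => q^(2*((N:ℤ)+1-m)) * G q N (m-1) * (q ^ (m^2) * w ^ m)), ← tsum_mul_left]
    refine tsum_congr (fun m => ?_)
    simp only [Equiv.coe_addRight, add_sub_cancel_right]
    have h1 : q ^ (2*((N:ℤ)+1-(m+1))) * q ^ (((m+1):ℤ)^2)
        = q ^ ((2*N+1 : ℕ) : ℤ) * q ^ ((m^2 : ℤ)) := by
      rw [← zpow_add₀ hq0, ← zpow_add₀ hq0]
      congr 1
      push_cast
      ring
    have h2 : w ^ (m+1) = w^m * w := zpow_add_one₀ hw0 m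
    calc q^(2*((N:ℤ)+1-(m+1))) * G q N m * (q^(((m+1):ℤ)^2) * w^(m+1))
        = (q ^ (2*((N:ℤ)+1-(m+1))) * q ^ (((m+1):ℤ)^2)) * G q N m * w^(m+1) := by ring
      _ = (q ^ ((2*N+1 : ℕ) : ℤ) * q ^ ((m^2 : ℤ))) * G q N m * (w^m * w) := by rw [h1, h2]
      _ = q^(2*N+1) * w * (G q N m * (q^((m^2 : ℤ))*w^m)) := by rw [zpow_natCast]; ring
  have eC : ∑' m : ℤ, q^(2*((N:ℤ)+1+m)) * G q N (m+1) * (q ^ (m^2) * w ^ m)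
      = (q^(2*N+1) * w⁻¹) * ∑' m : ℤ, G q N m * (q ^ (m^2) * w ^ m) := by
    rw [← Equiv.tsum_eq (Equiv.subRight (1:ℤ))
      (fun m => q^(2*((N:ℤ)+1+m)) * G q N (m+1) * (q ^ (m^2) * w ^ m)), ← tsum_mul_left]
    refine tsum_congr (fun m => ?_)
    simp only [Equiv.subRight_apply, sub_add_cancel]
    have h1 : q ^ (2*((N:ℤ)+1+(m-1))) * q ^ (((m-1):ℤ)^2)
        = q ^ ((2*N+1 : ℕ) : ℤ) * q ^ ((m^2 : ℤ)) := by
      rw [← zpow_add₀ hq0, ← zpow_add₀ hq0]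
      congr 1
      push_cast
      ring
    have h2 : w ^ (m-1) = w^m * w⁻¹ := zpow_sub_one₀ hw0 m
    calc q^(2*((N:ℤ)+1+(m-1))) * G q N m * (q^(((m-1):ℤ)^2) * w^(m-1))
        = (q ^ (2*((N:ℤ)+1+(m-1))) * q ^ (((m-1):ℤ)^2)) * G q N m * w^(m-1) := by ring
      _ = (q ^ ((2*N+1 : ℕ) : ℤ) * q ^ ((m^2 : ℤ))) * G q N m * (w^m * w⁻¹) := by rw [h1, h2]
      _ = q^(2*N+1) * w⁻¹ * (G q N m * (q^((m^2 : ℤ))*w^m)) := by rw [zpow_natCast]; ring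
  rw [eB, eC, show FF q w N = ∑' m : ℤ, G q N m * (q ^ (m^2) * w ^ m) from rfl]
  set S := ∑' m : ℤ, G q N m * (q ^ (m^2) * w ^ m) with hS
  field_simp
  ring

lemma FF_eq_prod (hq : ‖q‖ < 1) (hq0 : q ≠ 0) (hw0 : w ≠ 0) (N : ℕ) :
    FF q w N = ∏ j ∈ Finset.range N, ((1 + q^(2*j+1) * w) * (1 + q^(2*j+1) * w⁻¹)) := by
  induction N with
  | zero => simpa using FF_zero
  | succ n ih => rw [FF_succ hq hq0 hw0, ih, Finset.prod_range_succ]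

noncomputable def LLC (q : ℂ) : ℝ := ∑' n : ℕ, ‖Complex.log (1 - q^(2*n+2))‖

lemma summable_cgeo (hq : ‖q‖ < 1) (c : ℂ) : Summable (fun n : ℕ => c * (q^2)^n) := by
  refine (summable_geometric_of_norm_lt_one ?_).mul_left c
  rw [norm_pow]
  exact pow_lt_one₀ (norm_nonneg q) hq (by omega)

lemma summable_main (hq : ‖q‖ < 1) : Summable (fun n : ℕ => -(q^(2*n+2))) := by
  refine (summable_cgeo hq (-(q^2))).congr (fun n => ?_)
  rw [show 2*n+2 = 2 + n*2 from by ring, pow_add, pow_mul]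
  ring

lemma hlog_summable (hq : ‖q‖ < 1) :
    Summable (fun n : ℕ => Complex.log (1 - q^(2*n+2))) := by
  refine (summable_log_one_add (summable_main hq)).congr (fun n => ?_)
  rw [← sub_eq_add_neg]

lemma hlog_norm_summable (hq : ‖q‖ < 1) :
    Summable (fun n : ℕ => ‖Complex.log (1 - q^(2*n+2))‖) :=
  summable_norm_iff.mpr (hlog_summable hq)

lemma P_exp (hq : ‖q‖ < 1) (N : ℕ) :
    P q N = Complex.exp (∑ i ∈ Finset.range N, Complex.log (1 - q^(2*i+2))) := by
  rw [Complex.exp_sum]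
  exact Finset.prod_congr rfl
    (fun i _ => (Complex.exp_log (one_sub_pow_ne_zero hq (by omega))).symm)

lemma re_sum_bound (hq : ‖q‖ < 1) (N : ℕ) :
    |(∑ i ∈ Finset.range N, Complex.log (1 - q^(2*i+2))).re| ≤ LLC q := by
  refine le_trans (Complex.abs_re_le_norm _) ?_
  refine le_trans (norm_sum_le _ _) ?_
  exact (hlog_norm_summable hq).sum_le_tsum _ (fun i _ => norm_nonneg _)

lemma norm_P_le (hq : ‖q‖ < 1) (N : ℕ) : ‖P q N‖ ≤ Real.exp (LLC q) := by
  rw [P_exp hq, Complex.norm_exp, Real.exp_le_exp]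
  exact le_trans (le_abs_self _) (re_sum_bound hq N)

lemma norm_P_ge (hq : ‖q‖ < 1) (N : ℕ) : Real.exp (-(LLC q)) ≤ ‖P q N‖ := by
  rw [P_exp hq, Complex.norm_exp, Real.exp_le_exp]
  exact neg_le_of_neg_le (le_trans (neg_le_of_neg_le (neg_abs_le _)) (re_sum_bound hq N))

lemma norm_G_le (hq : ‖q‖ < 1) (N : ℕ) (m : ℤ) : ‖G q N m‖ ≤ Real.exp (3 * LLC q) := by
  unfold G
  split_ifs with h
  · rw [norm_div, norm_mul]
    calc ‖P q (2*N)‖ / (‖P q (((N:ℤ)+m).toNat)‖ * ‖P q (((N:ℤ)-m).toNat)‖)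
        ≤ Real.exp (LLC q) / (Real.exp (-(LLC q)) * Real.exp (-(LLC q))) := by
          refine div_le_div₀ (Real.exp_pos _).le (norm_P_le hq _) (by positivity)
            (mul_le_mul (norm_P_ge hq _) (norm_P_ge hq _) (Real.exp_pos _).le (norm_nonneg _))
      _ = Real.exp (3 * LLC q) := by
          rw [← Real.exp_add, ← Real.exp_sub]
          ring_nf
  · simp only [norm_zero]
    positivity

lemma multipliable_P (hq : ‖q‖ < 1) : Multipliable (fun n : ℕ => 1 - q^(2*n+2)) := by
  refine (multipliable_one_add (summable_main hq) (fun n => ?_)).congr (fun n => ?_)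
  · rw [← sub_eq_add_neg]; exact one_sub_pow_ne_zero hq (by omega)
  · rw [← sub_eq_add_neg]

lemma tprod_P_ne_zero (hq : ‖q‖ < 1) : (∏' n : ℕ, (1 - q^(2*n+2))) ≠ 0 := by
  have h := tprod_one_add_ne_zero (summable_main hq)
    (fun n => by rw [← sub_eq_add_neg]; exact one_sub_pow_ne_zero hq (by omega))
  rwa [tprod_congr (fun n => (sub_eq_add_neg 1 (q^(2*n+2))))]

lemma P_tendsto (hq : ‖q‖ < 1) :
    Tendsto (fun N => P q N) atTop (𝓝 (∏' n : ℕ, (1 - q^(2*n+2)))) :=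
  (multipliable_P hq).hasProd.tendsto_prod_nat

lemma G_tendsto (hq : ‖q‖ < 1) (m : ℤ) :
    Tendsto (fun N => G q N m) atTop (𝓝 ((∏' n : ℕ, (1 - q^(2*n+2)))⁻¹)) := by
  set Pinf := ∏' n : ℕ, (1 - q^(2*n+2)) with hPinf
  have hne : Pinf ≠ 0 := tprod_P_ne_zero hq
  have t2N : Tendsto (fun N : ℕ => P q (2*N)) atTop (𝓝 Pinf) :=
    (P_tendsto hq).comp (tendsto_atTop_atTop.mpr (fun b => ⟨b, fun n hn => by omega⟩))
  have tm : ∀ c : ℤ, Tendsto (fun N : ℕ => P q ((N:ℤ) + c).toNat) atTop (𝓝 Pinf) := fun c =>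
    (P_tendsto hq).comp (tendsto_atTop_atTop.mpr (fun b => ⟨b + c.natAbs, fun n hn => by omega⟩))
  have tm' : Tendsto (fun N : ℕ => P q ((N:ℤ) - m).toNat) atTop (𝓝 Pinf) := by
    refine (tm (-m)).congr (fun N => ?_)
    rw [sub_eq_add_neg]
  have comb : Tendsto (fun N : ℕ => P q (2*N) / (P q ((N:ℤ) + m).toNat * P q ((N:ℤ) - m).toNat))
      atTop (𝓝 (Pinf / (Pinf * Pinf))) :=
    t2N.div ((tm m).mul tm') (mul_ne_zero hne hne)
  have : Pinf / (Pinf * Pinf) = Pinf⁻¹ := by field_simp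
  rw [this] at comb
  refine comb.congr' ?_
  filter_upwards [eventually_ge_atTop m.natAbs] with N hN
  unfold G
  rw [if_pos (by rw [abs_le]; omega)]

lemma multipliable_fac (hq : ‖q‖ < 1) (u : ℂ) (h1 : ∀ j : ℕ, 1 + q^(2*j+1) * u ≠ 0) :
    Multipliable (fun j : ℕ => 1 + q^(2*j+1) * u) := by
  refine multipliable_one_add (a := fun j => q^(2*j+1)*u)
    ((summable_cgeo hq (q*u)).congr (fun j => ?_)) h1
  rw [show 2*j+1 = 1+j*2 from by ring, pow_add, pow_mul]
  ring

lemma summable_theta (hq : ‖q‖ < 1) (hq0 : q ≠ 0) (hw0 : w ≠ 0) :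
    Summable (fun m : ℤ => q ^ (m^2) * w ^ m) := by
  have hq' : 0 < ‖q‖ := norm_pos_iff.mpr hq0
  have hw' : 0 < ‖w‖ := norm_pos_iff.mpr hw0
  refine Summable.of_norm (((summable_aux hq' hq hw')).congr (fun m => ?_))
  rw [norm_mul, norm_zpow, norm_zpow]

theorem triple_product (hq : ‖q‖ < 1) (hq0 : q ≠ 0) (hw0 : w ≠ 0)
    (h1 : ∀ j : ℕ, 1 + q^(2*j+1) * w ≠ 0) (h2 : ∀ j : ℕ, 1 + q^(2*j+1) * w⁻¹ ≠ 0) :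
    ∑' m : ℤ, q ^ (m^2) * w ^ m
      = (∏' n : ℕ, (1 - q^(2*n+2))) * ∏' j : ℕ, ((1 + q^(2*j+1) * w) * (1 + q^(2*j+1) * w⁻¹)) := by
  have hq' : 0 < ‖q‖ := norm_pos_iff.mpr hq0
  have hw' : 0 < ‖w‖ := norm_pos_iff.mpr hw0
  have hmR : Multipliable (fun j : ℕ => (1 + q^(2*j+1) * w) * (1 + q^(2*j+1) * w⁻¹)) :=
    (multipliable_fac hq w h1).mul (multipliable_fac hq w⁻¹ h2)
  have T1 : Tendsto (fun N => FF q w N) atTop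
      (𝓝 (∏' j : ℕ, ((1 + q^(2*j+1) * w) * (1 + q^(2*j+1) * w⁻¹)))) :=
    hmR.hasProd.tendsto_prod_nat.congr (fun N => (FF_eq_prod hq hq0 hw0 N).symm)
  have T2 : Tendsto (fun N => FF q w N) atTop
      (𝓝 (∑' m : ℤ, (∏' n : ℕ, (1 - q^(2*n+2)))⁻¹ * (q ^ (m^2) * w ^ m))) := by
    have h := tendsto_tsum_of_dominated_convergence
      (f := fun (N : ℕ) (m : ℤ) => G q N m * (q ^ (m^2) * w ^ m))
      (bound := fun m : ℤ => Real.exp (3 * LLC q) * (‖q‖ ^ (m^2) * ‖w‖ ^ m))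
      ((summable_aux hq' hq hw').mul_left _)
      (fun m => (G_tendsto hq m).mul_const _) ?_
    · exact h
    · filter_upwards with N
      intro m
      rw [norm_mul, norm_mul, norm_zpow, norm_zpow]
      exact mul_le_mul_of_nonneg_right (norm_G_le hq N m) (by positivity)
  have heq := tendsto_nhds_unique T2 T1
  rw [tsum_mul_left, inv_mul_eq_iff_eq_mul₀ (tprod_P_ne_zero hq)] at heq
  exact heq

lemma key_ne {x : ℂ} (hx : ‖x‖ < 1) : 1 + x ≠ 0 := by
  intro h
  have hx1 : x = -1 := by linear_combination h
  rw [hx1] at hx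
  simp at hx

lemma pow_norm_lt (hq : ‖q‖ < 1) {k : ℕ} (hk : k ≠ 0) : ‖q ^ k‖ < 1 := by
  rw [norm_pow]
  exact pow_lt_one₀ (norm_nonneg q) hq hk

set_option maxHeartbeats 800000 in
/-- Main combination: the three theta sums multiply to `2 E³`. -/
lemma theta_combination (hq : ‖q‖ < 1) (hq0 : q ≠ 0) :
    (∑' m : ℤ, q ^ (m^2) * q ^ m) *
      ((∑' m : ℤ, q ^ (m^2) * (1:ℂ) ^ m) * (∑' m : ℤ, q ^ (m^2) * (-1:ℂ) ^ m))
    = 2 * (∏' n : ℕ, (1 - q^(2*n+2))) ^ 3 := by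
  have h1 : ∀ j : ℕ, 1 + q^(2*j+1) * (1:ℂ) ≠ 0 := fun j =>
    key_ne (by rw [mul_one]; exact pow_norm_lt hq (by omega))
  have h1' : ∀ j : ℕ, 1 + q^(2*j+1) * (1:ℂ)⁻¹ ≠ 0 := fun j => by
    rw [inv_one]; exact h1 j
  have hm1 : ∀ j : ℕ, 1 + q^(2*j+1) * (-1:ℂ) ≠ 0 := fun j =>
    key_ne (by rw [norm_mul, norm_neg, norm_one, mul_one]; exact pow_norm_lt hq (by omega))
  have hm1' : ∀ j : ℕ, 1 + q^(2*j+1) * (-1:ℂ)⁻¹ ≠ 0 := fun j => by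
    rw [show ((-1:ℂ))⁻¹ = -1 from by norm_num]; exact hm1 j
  have hqq : ∀ j : ℕ, q^(2*j+1) * q = q^(2*j+2) := fun j => by
    rw [← pow_succ]
  have hqinv : ∀ j : ℕ, q^(2*(j+1)+1) * q⁻¹ = q^(2*j+2) := fun j => by
    rw [show 2*(j+1)+1 = (2*j+2)+1 from by ring, pow_succ, mul_assoc,
      mul_inv_cancel₀ hq0, mul_one]
  have hq1 : ∀ j : ℕ, 1 + q^(2*j+1) * q ≠ 0 := fun j => by
    rw [hqq]; exact key_ne (pow_norm_lt hq (by omega))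
  have hq2 : ∀ j : ℕ, 1 + q^(2*j+1) * q⁻¹ ≠ 0 := by
    rintro (_ | j)
    · rw [pow_one, mul_inv_cancel₀ hq0]; norm_num
    · rw [hqinv]; exact key_ne (pow_norm_lt hq (by omega))
  -- canonical multipliable products
  have mA : Multipliable (fun j : ℕ => 1 + q^(2*j+1)) :=
    (multipliable_fac hq 1 h1).congr (fun j => by rw [mul_one])
  have mB : Multipliable (fun j : ℕ => 1 - q^(2*j+1)) :=
    (multipliable_fac hq (-1) hm1).congr (fun j => by ring)
  have mQ : Multipliable (fun j : ℕ => 1 + q^(2*j+2)) :=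
    (multipliable_fac hq q hq1).congr (fun j => by rw [hqq])
  set A := ∏' j : ℕ, (1 + q^(2*j+1)) with hA
  set B := ∏' j : ℕ, (1 - q^(2*j+1)) with hB
  set Q := ∏' j : ℕ, (1 + q^(2*j+2)) with hQ
  set E := ∏' n : ℕ, (1 - q^(2*n+2)) with hE
  -- the three triple product evaluations
  have hS1 : (∑' m : ℤ, q ^ (m^2) * (1:ℂ) ^ m) = E * (A * A) := by
    rw [triple_product hq hq0 one_ne_zero h1 h1',
      tprod_congr (fun j => show (1+q^(2*j+1)*1)*(1+q^(2*j+1)*(1:ℂ)⁻¹)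
        = (1+q^(2*j+1))*(1+q^(2*j+1)) from by rw [inv_one, mul_one]),
      Multipliable.tprod_mul mA mA]
  have hS2 : (∑' m : ℤ, q ^ (m^2) * (-1:ℂ) ^ m) = E * (B * B) := by
    rw [triple_product hq hq0 (by norm_num : (-1:ℂ) ≠ 0) hm1 hm1',
      tprod_congr (fun j => show (1+q^(2*j+1)*(-1))*(1+q^(2*j+1)*(-1:ℂ)⁻¹)
        = (1-q^(2*j+1))*(1-q^(2*j+1)) from by norm_num; ring),
      Multipliable.tprod_mul mB mB]
  have hSq : (∑' m : ℤ, q ^ (m^2) * q ^ m) = E * (Q * (2 * Q)) := by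
    rw [triple_product hq hq0 hq0 hq1 hq2,
      Multipliable.tprod_mul (multipliable_fac hq q hq1) (multipliable_fac hq q⁻¹ hq2),
      tprod_congr (fun j => show 1 + q^(2*j+1)*q = 1 + q^(2*j+2) from by rw [hqq]),
      tprod_eq_zero_mul' (f := fun j : ℕ => 1 + q^(2*j+1) * q⁻¹)
        (mQ.congr (fun k => by show 1 + q^(2*k+2) = 1 + q^(2*(k+1)+1)*q⁻¹; rw [hqinv k])),
      tprod_congr (fun j => show 1 + q^(2*(j+1)+1)*q⁻¹ = 1 + q^(2*j+2) from by rw [hqinv]),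
      show 1 + q^(2*0+1)*q⁻¹ = 2 from by rw [pow_one, mul_inv_cancel₀ hq0]; norm_num]
  -- the Euler-type identity Q * (A * B) = 1
  have hABQ : Q * (A * B) = 1 := by
    have hsf : Summable (fun k : ℕ => -(q^(k+1))) :=
      ((summable_geometric_of_norm_lt_one hq).mul_left (-q)).congr
        (fun k => by rw [pow_succ]; ring)
    have hsg : Summable (fun k : ℕ => q^(k+1)) :=
      ((summable_geometric_of_norm_lt_one hq).mul_left q).congr
        (fun k => by rw [pow_succ]; ring)
    have mf : Multipliable (fun k : ℕ => 1 - q^(k+1)) :=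
      (multipliable_one_add hsf (fun k => by
        rw [← sub_eq_add_neg]; exact one_sub_pow_ne_zero hq (by omega))).congr
        (fun k => by rw [← sub_eq_add_neg])
    have mg : Multipliable (fun k : ℕ => 1 + q^(k+1)) :=
      multipliable_one_add hsg (fun k => key_ne (pow_norm_lt hq (by omega)))
    have mfe : Multipliable (fun k : ℕ => 1 - q^(2*k+1)) := mB
    have mfo : Multipliable (fun k : ℕ => 1 - q^(2*k+1+1)) :=
      (multipliable_P hq).congr (fun k => by norm_num)
    have mge : Multipliable (fun k : ℕ => 1 + q^(2*k+1)) := mA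
    have mgo : Multipliable (fun k : ℕ => 1 + q^(2*k+1+1)) :=
      mQ.congr (fun k => by norm_num)
    have E1 : B * E = ∏' k : ℕ, (1 - q^(k+1)) := by
      rw [← tprod_even_mul_odd (f := fun k : ℕ => 1 - q^(k+1)) mfe mfo]
    have E3 : A * Q = ∏' k : ℕ, (1 + q^(k+1)) := by
      rw [← tprod_even_mul_odd (f := fun k : ℕ => 1 + q^(k+1)) mge mgo]
    have E2 : (∏' k : ℕ, (1 - q^(k+1))) * (∏' k : ℕ, (1 + q^(k+1))) = E := by
      rw [← Multipliable.tprod_mul mf mg]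
      exact tprod_congr (fun k => by ring)
    have hEne : E ≠ 0 := tprod_P_ne_zero hq
    refine mul_right_cancel₀ hEne ?_
    calc (Q * (A * B)) * E = (B * E) * (A * Q) := by ring
      _ = (∏' k : ℕ, (1 - q^(k+1))) * (∏' k : ℕ, (1 + q^(k+1))) := by rw [E1, E3]
      _ = E := E2
      _ = 1 * E := (one_mul E).symm
    
  rw [hS1, hS2, hSq]
  calc (E * (Q * (2 * Q))) * ((E * (A * A)) * (E * (B * B)))
      = 2 * E^3 * (Q * (A * B))^2 := by ring
    _ = 2 * E^3 := by rw [hABQ]; ring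

end ThetaAux

open Complex

open ThetaAux

/-- the product formula for theta constants:
`(θ₂(0,τ)·θ₃(0,τ)·θ₄(0,τ))⁸ = 2⁸·q̃·∏_{n≥1}(1 − q̃ⁿ)²⁴` with `q̃ = exp(2iπτ)`;
in particular `|θ₂θ₃θ₄|⁸ = 2⁸·|Δ(τ)|` for the modular discriminant
`Δ(τ) = q̃·∏_{n≥1}(1 − q̃ⁿ)²⁴`. -/
theorem theta_product_modular_discriminant (τ : ℂ) (hτ : 0 < τ.im) :
    Multipliable (fun n : ℕ => 1 - Complex.exp (2 * Real.pi * Complex.I * τ) ^ (n + 1)) ∧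
    (jTheta₂ 0 τ * jTheta₃ 0 τ * jTheta₄ 0 τ) ^ 8 =
      2 ^ 8 * Complex.exp (2 * Real.pi * Complex.I * τ) *
        (∏' n : ℕ, (1 - Complex.exp (2 * Real.pi * Complex.I * τ) ^ (n + 1))) ^ 24 ∧
    ‖jTheta₂ 0 τ * jTheta₃ 0 τ * jTheta₄ 0 τ‖ ^ 8 =
      2 ^ 8 * ‖Complex.exp (2 * Real.pi * Complex.I * τ) *
        (∏' n : ℕ, (1 - Complex.exp (2 * Real.pi * Complex.I * τ) ^ (n + 1))) ^ 24‖ := by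
  set q : ℂ := Complex.exp (Real.pi * Complex.I * τ) with hqdef
  have hq0 : q ≠ 0 := Complex.exp_ne_zero _
  have hq : ‖q‖ < 1 := by
    rw [hqdef, Complex.norm_exp]
    refine Real.exp_lt_one_iff.mpr ?_
    have : (↑Real.pi * Complex.I * τ).re = -(Real.pi * τ.im) := by
      simp [Complex.mul_re, Complex.mul_im]
    rw [this]
    have := Real.pi_pos
    nlinarith
  have hx : Complex.exp (2 * Real.pi * Complex.I * τ) = q ^ 2 := by
    rw [hqdef, sq, ← Complex.exp_add]
    congr 1
    ring
  have hxn : ∀ n : ℕ, Complex.exp (2 * Real.pi * Complex.I * τ) ^ (n+1) = q ^ (2*n+2) := by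
    intro n
    rw [hx, ← pow_mul, show 2*(n+1) = 2*n+2 from by ring]
  -- identification of the theta constants
  have hθ3 : jTheta₃ 0 τ = ∑' m : ℤ, q ^ (m^2) * (1:ℂ) ^ m := by
    refine tsum_congr (fun n => ?_)
    rw [one_zpow, mul_one, hqdef, ← Complex.exp_int_mul]
    congr 1
    push_cast
    ring
  have hθ4 : jTheta₄ 0 τ = ∑' m : ℤ, q ^ (m^2) * (-1:ℂ) ^ m := by
    refine tsum_congr (fun n => ?_)
    have h : Complex.exp (Real.pi * Complex.I * (τ * (n : ℂ) ^ 2 + 2 * (n : ℂ) * 0))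
        = q ^ (n^2) := by
      rw [hqdef, ← Complex.exp_int_mul]
      congr 1
      push_cast
      ring
    rw [h, mul_comm]
  have hθ2 : jTheta₂ 0 τ = Complex.exp (Real.pi * Complex.I * τ / 4)
      * ∑' m : ℤ, q ^ (m^2) * q ^ m := by
    rw [jTheta₂, ← tsum_mul_left]
    refine tsum_congr (fun n => ?_)
    rw [show (Real.pi : ℂ) * Complex.I * (τ * ((n : ℂ) + 1/2) ^ 2 + (2 * (n : ℂ) + 1) * 0)
        = Real.pi * Complex.I * τ / 4
          + (((n^2 : ℤ) : ℂ) * (Real.pi * Complex.I * τ) + ((n : ℤ) : ℂ) * (Real.pi * Complex.I * τ))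
        from by push_cast; ring,
      Complex.exp_add, Complex.exp_add, Complex.exp_int_mul, Complex.exp_int_mul, hqdef]
  -- assemble
  have hcomb := theta_combination hq hq0
  have hE := tprod_P_ne_zero hq
  have hprod : (∏' n : ℕ, (1 - Complex.exp (2 * Real.pi * Complex.I * τ) ^ (n+1)))
      = ∏' n : ℕ, (1 - q ^ (2*n+2)) := tprod_congr (fun n => by rw [hxn n])
  have conj1 : Multipliable (fun n : ℕ => 1 - Complex.exp (2 * Real.pi * Complex.I * τ) ^ (n + 1)) :=
    (multipliable_P hq).congr (fun n => by rw [hxn n])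
  have he4 : Complex.exp (Real.pi * Complex.I * τ / 4) ^ 8
      = Complex.exp (2 * Real.pi * Complex.I * τ) := by
    rw [← Complex.exp_nat_mul]
    congr 1
    push_cast
    ring
  have conj2 : (jTheta₂ 0 τ * jTheta₃ 0 τ * jTheta₄ 0 τ) ^ 8 =
      2 ^ 8 * Complex.exp (2 * Real.pi * Complex.I * τ) *
        (∏' n : ℕ, (1 - Complex.exp (2 * Real.pi * Complex.I * τ) ^ (n + 1))) ^ 24 := by
    rw [hθ2, hθ3, hθ4, hprod]
    calc (Complex.exp (Real.pi * Complex.I * τ / 4) * (∑' m : ℤ, q ^ (m^2) * q ^ m)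
          * (∑' m : ℤ, q ^ (m^2) * (1:ℂ) ^ m) * (∑' m : ℤ, q ^ (m^2) * (-1:ℂ) ^ m)) ^ 8
        = (Complex.exp (Real.pi * Complex.I * τ / 4)) ^ 8 *
            ((∑' m : ℤ, q ^ (m^2) * q ^ m) *
              ((∑' m : ℤ, q ^ (m^2) * (1:ℂ) ^ m) * (∑' m : ℤ, q ^ (m^2) * (-1:ℂ) ^ m))) ^ 8 := by
          ring
      _ = Complex.exp (2 * Real.pi * Complex.I * τ) * (2 * (∏' n : ℕ, (1 - q^(2*n+2))) ^ 3) ^ 8 := by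
          rw [he4, hcomb]
      _ = 2 ^ 8 * Complex.exp (2 * Real.pi * Complex.I * τ) * (∏' n : ℕ, (1 - q^(2*n+2))) ^ 24 := by
          ring
  refine ⟨conj1, conj2, ?_⟩
  rw [← norm_pow, conj2,
    show (2:ℂ) ^ 8 * Complex.exp (2 * Real.pi * Complex.I * τ) *
        (∏' n : ℕ, (1 - Complex.exp (2 * Real.pi * Complex.I * τ) ^ (n + 1))) ^ 24
      = 2 ^ 8 * (Complex.exp (2 * Real.pi * Complex.I * τ) *
        (∏' n : ℕ, (1 - Complex.exp (2 * Real.pi * Complex.I * τ) ^ (n + 1))) ^ 24)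
      from by ring,
    norm_mul, norm_pow, Complex.norm_two]
end

section
/- Let τ ∈ ℂ with Im τ > 0 and z ∈ ℂ. Then the four Jacobi theta functions have no common zero: it is not the case that θ₁(z,τ) = θ₂(z,τ) = θ₃(z,τ) = θ₄(z,τ) = 0. In particular the vector (θ₁(z,τ), θ₂(z,τ), θ₃(z,τ), θ₄(z,τ)) ∈ ℂ⁴ is nonzero and defines a point of projective space ℙ³(ℂ). -/
open Complex

section ThetaAux

open Real

lemma exp_pi_I_int (n : ℤ) : cexp ((π : ℂ) * I * n) = (-1 : ℂ) ^ n := by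
  rw [show ((π : ℂ) * I * n : ℂ) = n * (π * I) by ring, Complex.exp_int_mul, Complex.exp_pi_mul_I]

lemma exp_pi_I_int_sq (n : ℤ) : cexp ((π : ℂ) * I * n ^ 2) = (-1 : ℂ) ^ n := by
  rw [show ((π : ℂ) * I * (n:ℂ) ^ 2 : ℂ) = (n^2 : ℤ) * ((π : ℂ) * I) by push_cast; ring,
    Complex.exp_int_mul, Complex.exp_pi_mul_I]
  rcases Int.even_or_odd n with h | h
  · rw [Even.neg_one_zpow (Int.even_pow.mpr ⟨h, two_ne_zero⟩), h.neg_one_zpow]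
  · rw [Odd.neg_one_zpow (by exact h.pow), h.neg_one_zpow]

lemma jacobiTheta₂_half_left (z τ : ℂ) :
    jacobiTheta₂ (z + 1/2) τ = ∑' n : ℤ, (-1 : ℂ) ^ n * jacobiTheta₂_term n z τ := by
  refine tsum_congr fun n ↦ ?_
  rw [jacobiTheta₂_term, jacobiTheta₂_term, ← exp_pi_I_int n, ← Complex.exp_add]
  congr 1
  ring

lemma jacobiTheta₂_add_one_right (z τ : ℂ) :
    jacobiTheta₂ z (τ + 1) = jacobiTheta₂ (z + 1/2) τ := by
  rw [jacobiTheta₂_half_left]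
  refine tsum_congr fun n ↦ ?_
  rw [jacobiTheta₂_term, jacobiTheta₂_term, ← exp_pi_I_int_sq n, ← Complex.exp_add]
  congr 1
  ring

/-- zero propagation under `τ ↦ -1/τ`. -/
lemma jacobiTheta₂_S_zero {c τ : ℂ} (hτ : τ ≠ 0) (h : jacobiTheta₂ c τ = 0) :
    jacobiTheta₂ (c / τ) (-1 / τ) = 0 := by
  rw [jacobiTheta₂_functional_equation (c / τ) (-1 / τ),
    show c / τ / (-1 / τ) = -c by field_simp,
    show (-1 : ℂ) / (-1 / τ) = τ by field_simp,
    jacobiTheta₂_neg_left, h, mul_zero]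

/-- The configuration: `jacobiTheta₂ (·, τ)` vanishes at all four half-period translates of `z`. -/
def ThetaVan (τ z : ℂ) : Prop :=
  jacobiTheta₂ z τ = 0 ∧ jacobiTheta₂ (z + 1/2) τ = 0 ∧
  jacobiTheta₂ (z + τ/2) τ = 0 ∧ jacobiTheta₂ (z + τ/2 + 1/2) τ = 0

lemma ThetaVan.T {τ z : ℂ} (h : ThetaVan τ z) : ThetaVan (τ + 1) (z - 1/2) := by
  obtain ⟨h1, h2, h3, h4⟩ := h
  refine ⟨?_, ?_, ?_, ?_⟩
  · rw [jacobiTheta₂_add_one_right, sub_add_cancel, h1]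
  · rw [jacobiTheta₂_add_one_right, show z - 1/2 + 1/2 + 1/2 = z + 1/2 by ring, h2]
  · rw [jacobiTheta₂_add_one_right,
      show z - 1/2 + (τ+1)/2 + 1/2 = z + τ/2 + 1/2 by ring, h4]
  · rw [jacobiTheta₂_add_one_right,
      show z - 1/2 + (τ+1)/2 + 1/2 + 1/2 = (z + τ/2) + 1 by ring, jacobiTheta₂_add_left, h3]

lemma ThetaVan.T' {τ z : ℂ} (h : ThetaVan τ z) : ThetaVan (τ - 1) (z + 1/2) := by
  obtain ⟨h1, h2, h3, h4⟩ := h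
  have key : ∀ c : ℂ, jacobiTheta₂ (c + 1/2) (τ - 1) = jacobiTheta₂ c τ := by
    intro c
    rw [← jacobiTheta₂_add_one_right, sub_add_cancel]
  refine ⟨?_, ?_, ?_, ?_⟩
  · rw [key, h1]
  · rw [show z + 1/2 + 1/2 = (z + 1/2) + 1/2 by ring, key, h2]
  · have hp := jacobiTheta₂_add_left (z + τ/2 - 1/2) τ
    rw [show z + τ/2 - 1/2 + 1 = z + τ/2 + 1/2 by ring] at hp
    rw [show z + 1/2 + (τ-1)/2 = (z + τ/2 - 1/2) + 1/2 by ring, key, ← hp, h4]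
  · rw [show z + 1/2 + (τ-1)/2 + 1/2 = (z + τ/2) + 1/2 by ring, key, h3]

lemma ThetaVan.S {τ z : ℂ} (hτ : 0 < τ.im) (h : ThetaVan τ z) : ThetaVan (-1/τ) (z/τ) := by
  have hτ0 : τ ≠ 0 := fun h0 ↦ by simp [h0] at hτ
  obtain ⟨h1, h2, h3, h4⟩ := h
  have quasi : ∀ c : ℂ, jacobiTheta₂ c (-1/τ) = 0 → jacobiTheta₂ (c + (-1/τ)) (-1/τ) = 0 := by
    intro c hc
    rw [jacobiTheta₂_add_left', hc, mul_zero]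
  refine ⟨?_, ?_, ?_, ?_⟩
  · exact jacobiTheta₂_S_zero hτ0 h1
  · have := jacobiTheta₂_S_zero hτ0 h3
    rwa [show (z + τ/2)/τ = z/τ + 1/2 by field_simp; try ring_nf; try tauto] at this
  · have := jacobiTheta₂_S_zero hτ0 h2
    rw [show (z + 1/2)/τ = z/τ - (-1/τ)/2 by field_simp; try ring_nf; try tauto] at this
    have := quasi _ this
    rwa [show z/τ - (-1/τ)/2 + (-1/τ) = z/τ + (-1/τ)/2 by ring] at this
  · have := jacobiTheta₂_S_zero hτ0 h4
    rw [show (z + τ/2 + 1/2)/τ = z/τ + 1/2 - (-1/τ)/2 by field_simp; try ring_nf; try tauto] at this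
    have := quasi _ this
    rwa [show z/τ + 1/2 - (-1/τ)/2 + (-1/τ) = z/τ + (-1/τ)/2 + 1/2 by ring] at this

lemma jacobiTheta₂_double {a σ : ℂ} (hσ : 0 < σ.im)
    (h0 : jacobiTheta₂ a σ = 0) (h1 : jacobiTheta₂ (a + 1/2) σ = 0) :
    jacobiTheta₂ (2*a) (4*σ) = 0 ∧ jacobiTheta₂ (2*a + 2*σ) (4*σ) = 0 := by
  set t : ℤ → ℂ := fun n ↦ jacobiTheta₂_term n a σ with ht
  have hsum : Summable t := (summable_jacobiTheta₂_term_iff a σ).mpr hσ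
  have hnorm : ∀ n : ℤ, ‖(-1 : ℂ) ^ n * t n‖ = ‖t n‖ := by
    intro n
    rw [norm_mul, norm_zpow, norm_neg, norm_one, one_zpow, one_mul]
  have hsum' : Summable (fun n : ℤ ↦ (-1 : ℂ) ^ n * t n) :=
    Summable.of_norm (by simpa only [hnorm] using hsum.norm)
  have hinj : Function.Injective (fun m : ℤ ↦ 2 * m) := fun m₁ m₂ h ↦ by
    dsimp at h; omega
  have hinj' : Function.Injective (fun m : ℤ ↦ 2 * m + 1) := fun m₁ m₂ h ↦ by
    dsimp at h; omega
  -- even part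
  have hplus : jacobiTheta₂ a σ + jacobiTheta₂ (a + 1/2) σ = 2 * jacobiTheta₂ (2*a) (4*σ) := by
    rw [jacobiTheta₂_half_left]
    nth_rewrite 1 [jacobiTheta₂]
    rw [← Summable.tsum_add hsum hsum']
    have e1 : ∑' n : ℤ, (t n + (-1 : ℂ) ^ n * t n) = ∑' n : ℤ, (1 + (-1 : ℂ) ^ n) * t n :=
      tsum_congr fun n ↦ by ring
    have hsupp : Function.support (fun n : ℤ ↦ (1 + (-1 : ℂ) ^ n) * t n)
        ⊆ Set.range (fun m : ℤ ↦ 2 * m) := by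
      intro x hx
      rcases Int.even_or_odd x with he | ho
      · obtain ⟨r, hr⟩ := he
        exact ⟨r, by dsimp only; omega⟩
      · exfalso
        apply hx
        dsimp only
        rw [ho.neg_one_zpow]
        ring
    rw [e1, ← Function.Injective.tsum_eq hinj hsupp,
      show (2:ℂ) * jacobiTheta₂ (2*a) (4*σ) = ∑' m : ℤ, 2 * jacobiTheta₂_term m (2*a) (4*σ) by
        rw [jacobiTheta₂, tsum_mul_left]]
    refine tsum_congr fun m ↦ ?_
    have h2m : Even (2 * m) := ⟨m, two_mul m⟩
    show (1 + (-1 : ℂ) ^ (2 * m)) * t (2 * m) = _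
    rw [h2m.neg_one_zpow, ht]
    simp only [jacobiTheta₂_term]
    rw [show cexp (2*(π:ℂ)*I*((2*m : ℤ):ℂ)*a + (π:ℂ)*I*((2*m : ℤ):ℂ)^2*σ)
        = cexp (2*(π:ℂ)*I*m*(2*a) + (π:ℂ)*I*(m:ℂ)^2*(4*σ)) by congr 1; push_cast; ring]
    ring
  -- odd part
  have hminus : jacobiTheta₂ a σ - jacobiTheta₂ (a + 1/2) σ
      = 2 * cexp (2*(π:ℂ)*I*a + (π:ℂ)*I*σ) * jacobiTheta₂ (2*a + 2*σ) (4*σ) := by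
    rw [jacobiTheta₂_half_left]
    nth_rewrite 1 [jacobiTheta₂]
    rw [← Summable.tsum_sub hsum hsum']
    have e1 : ∑' n : ℤ, (t n - (-1 : ℂ) ^ n * t n) = ∑' n : ℤ, (1 - (-1 : ℂ) ^ n) * t n :=
      tsum_congr fun n ↦ by ring
    have hsupp : Function.support (fun n : ℤ ↦ (1 - (-1 : ℂ) ^ n) * t n)
        ⊆ Set.range (fun m : ℤ ↦ 2 * m + 1) := by
      intro x hx
      rcases Int.even_or_odd x with he | ho
      · exfalso
        apply hx
        dsimp only
        rw [he.neg_one_zpow]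
        ring
      · obtain ⟨r, hr⟩ := ho
        exact ⟨r, by dsimp only; omega⟩
    rw [e1, ← Function.Injective.tsum_eq hinj' hsupp,
      show (2:ℂ) * cexp (2*(π:ℂ)*I*a + (π:ℂ)*I*σ) * jacobiTheta₂ (2*a+2*σ) (4*σ)
          = ∑' m : ℤ, 2 * cexp (2*(π:ℂ)*I*a + (π:ℂ)*I*σ) * jacobiTheta₂_term m (2*a+2*σ) (4*σ) by
        rw [jacobiTheta₂, tsum_mul_left]]
    refine tsum_congr fun m ↦ ?_
    have h2m : Odd (2 * m + 1) := ⟨m, rfl⟩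
    show (1 - (-1 : ℂ) ^ (2 * m + 1)) * t (2 * m + 1) = _
    rw [h2m.neg_one_zpow, ht]
    simp only [jacobiTheta₂_term]
    rw [show cexp (2*(π:ℂ)*I*((2*m+1 : ℤ):ℂ)*a + (π:ℂ)*I*((2*m+1 : ℤ):ℂ)^2*σ)
        = cexp (2*(π:ℂ)*I*a + (π:ℂ)*I*σ) * cexp (2*(π:ℂ)*I*m*(2*a+2*σ) + (π:ℂ)*I*(m:ℂ)^2*(4*σ)) by
          rw [← Complex.exp_add]; congr 1; push_cast; ring]
    ring
  rw [h0, h1] at hplus hminus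
  constructor
  · have h2 := hplus.symm
    rw [show (0:ℂ) + 0 = 0 by ring] at h2
    rcases mul_eq_zero.mp h2 with h | h
    · norm_num at h
    · exact h
  · have h2 := hminus.symm
    rw [show (0:ℂ) - 0 = 0 by ring] at h2
    rcases mul_eq_zero.mp h2 with h | h
    · rcases mul_eq_zero.mp h with h' | h'
      · norm_num at h'
      · exact absurd h' (Complex.exp_ne_zero _)
    · exact h

lemma jacobiTheta₂_ne_zero_of_dominant {b σ : ℂ} (hY : 1 ≤ σ.im) (n₀ : ℤ)
    (hb : |b.im + n₀ * σ.im| ≤ σ.im / 8) : jacobiTheta₂ b σ ≠ 0 := by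
  have hY0 : (0:ℝ) < σ.im := lt_of_lt_of_le one_pos hY
  set t : ℤ → ℂ := fun n ↦ jacobiTheta₂_term n b σ with ht
  have hsum : Summable t := (summable_jacobiTheta₂_term_iff b σ).mpr hY0
  set C : ℝ := ‖t n₀‖ with hC
  have hCpos : 0 < C := by
    rw [hC, ht]
    simp only [norm_jacobiTheta₂_term]
    exact Real.exp_pos _
  have key : ∀ j : ℤ, j ≠ 0 → ‖t (j + n₀)‖ ≤ C * (1/4 : ℝ) ^ j.natAbs := by
    intro j hj
    have hK1 : (1:ℝ) ≤ |(j:ℝ)| := by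
      rw [← Int.cast_abs]
      exact_mod_cast Int.one_le_abs (by omega)
    have hJK : |(j:ℝ)| ^ 2 = (j:ℝ) ^ 2 := sq_abs _
    have hprod : (j:ℝ) * (b.im + n₀ * σ.im) ≥ -(|(j:ℝ)| * (σ.im / 8)) := by
      have h2 : |(j:ℝ) * (b.im + n₀ * σ.im)| ≤ |(j:ℝ)| * (σ.im / 8) := by
        rw [abs_mul]
        exact mul_le_mul_of_nonneg_left hb (abs_nonneg _)
      linarith [neg_abs_le ((j:ℝ) * (b.im + n₀ * σ.im))]
    have hpi : (3:ℝ) ≤ π := by linarith [Real.pi_gt_three]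
    have habs : ((j.natAbs : ℝ)) = |(j:ℝ)| := by
      rw [Nat.cast_natAbs, Int.cast_abs]
    -- the quantity X = j²Y + 2j(y + n₀Y)
    have h1 : (0:ℝ) ≤ (|(j:ℝ)| - 1) * |(j:ℝ)| * σ.im :=
      mul_nonneg (mul_nonneg (by linarith) (abs_nonneg _)) hY0.le
    have h2 : (0:ℝ) ≤ (σ.im - 1) * |(j:ℝ)| :=
      mul_nonneg (by linarith) (abs_nonneg _)
    have hX : (j:ℝ)^2 * σ.im + 2 * j * (b.im + n₀ * σ.im) ≥ (3/4) * |(j:ℝ)| := by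
      nlinarith [h1, h2, hprod, hJK]
    have hXpi : π * ((j:ℝ)^2 * σ.im + 2 * j * (b.im + n₀ * σ.im)) ≥ 2 * |(j:ℝ)| := by
      nlinarith [hX, hpi, abs_nonneg (j:ℝ)]
    have hexp : -π * ((j:ℝ) + n₀) ^ 2 * σ.im - 2 * π * ((j:ℝ) + n₀) * b.im ≤
        (-π * (n₀:ℝ) ^ 2 * σ.im - 2 * π * (n₀:ℝ) * b.im) + (-2 * |(j:ℝ)|) := by
      nlinarith [hXpi]
    have h2j : rexp (-2 : ℝ) ^ j.natAbs = rexp (-2 * |(j:ℝ)|) := by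
      rw [← Real.exp_nat_mul, habs]
      congr 1
      ring
    calc ‖t (j + n₀)‖ = rexp (-π * ((j:ℝ) + n₀) ^ 2 * σ.im - 2 * π * ((j:ℝ) + n₀) * b.im) := by
          rw [ht]
          rw [norm_jacobiTheta₂_term]
          congr 1
          push_cast
          ring
      _ ≤ rexp ((-π * (n₀:ℝ) ^ 2 * σ.im - 2 * π * (n₀:ℝ) * b.im) + (-2 * |(j:ℝ)|)) :=
          Real.exp_le_exp.mpr hexp
      _ = C * rexp (-2) ^ j.natAbs := by
          rw [hC, ht, norm_jacobiTheta₂_term, h2j, ← Real.exp_add]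
      _ ≤ C * (1/4 : ℝ) ^ j.natAbs := by
          refine mul_le_mul_of_nonneg_left (pow_le_pow_left₀ (Real.exp_pos _).le ?_ _) hCpos.le
          rw [Real.exp_neg, show (1/4 : ℝ) = (4:ℝ)⁻¹ by norm_num]
          refine inv_anti₀ (by norm_num) ?_
          have h1 : (2.7182818283 : ℝ) < rexp 1 := Real.exp_one_gt_d9
          have h2 : rexp 2 = rexp 1 * rexp 1 := by
            rw [← Real.exp_add]; norm_num
          nlinarith
  -- now the summation argument
  intro h0
  have hΘ : (0:ℂ) = ∑' n : ℤ, t n := by rw [← h0]; rfl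
  have hdecomp := Summable.tsum_eq_add_tsum_ite hsum n₀
  set R : ℂ := ∑' n : ℤ, if n = n₀ then 0 else t n with hRdef
  have htR : t n₀ = -R := by
    rw [← hΘ] at hdecomp
    linear_combination -hdecomp
  -- reindex
  set u : ℤ → ℂ := fun j ↦ if j = 0 then 0 else t (j + n₀) with hu
  have hRu : R = ∑' j : ℤ, u j := by
    rw [hRdef, ← Equiv.tsum_eq (Equiv.addRight n₀) (fun n ↦ if n = n₀ then 0 else t n)]
    refine tsum_congr fun j ↦ ?_
    have hiff : (Equiv.addRight n₀) j = n₀ ↔ j = 0 := by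
      simp only [Equiv.coe_addRight]
      omega
    rw [hu]
    simp only [Equiv.coe_addRight]
    by_cases h : j = 0 <;> simp [h, hiff.mpr, (by omega : j + n₀ = n₀ ↔ j = 0)]
  set g : ℤ → ℝ := fun j ↦ if j = 0 then 0 else C * (1/4 : ℝ) ^ j.natAbs with hg
  have hng : ∀ j : ℤ, ‖u j‖ ≤ g j := by
    intro j
    by_cases h : j = 0
    · simp [hu, hg, h]
    · simp only [hu, hg, if_neg h]
      exact key j h
  have hpow : Summable (fun k : ℕ ↦ C * (1/4 : ℝ) ^ k) :=
    (summable_geometric_of_lt_one (by norm_num) (by norm_num)).mul_left C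
  have hg1 : Summable (fun k : ℕ ↦ g k) := by
    refine Summable.of_nonneg_of_le (fun k ↦ ?_) (fun k ↦ ?_) hpow
    · by_cases h : (k:ℤ) = 0 <;> simp [hg, h]
      positivity
    · by_cases h : (k:ℤ) = 0
      · simp [hg, h]
        positivity
      · simp only [hg, if_neg h, Int.natAbs_natCast]
        exact le_refl _
  have hg2e : ∀ k : ℕ, g (-(k+1)) = (C * (1/4)) * (1/4 : ℝ) ^ k := by
    intro k
    have h : (-(k+1) : ℤ) ≠ 0 := by omega
    have h2 : ((-(k+1) : ℤ)).natAbs = k + 1 := by omega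
    rw [hg]
    simp only [if_neg h, h2, pow_succ]
    ring
  have hg2 : Summable (fun k : ℕ ↦ g (-(k+1))) := by
    refine Summable.congr ((summable_geometric_of_lt_one (by norm_num) (by norm_num)).mul_left
      (C * (1/4))) fun k ↦ (hg2e k).symm
  have gsum : Summable g := Summable.of_nat_of_neg_add_one hg1 hg2
  have husum : Summable (fun j : ℤ ↦ ‖u j‖) :=
    Summable.of_nonneg_of_le (fun j ↦ norm_nonneg _) hng gsum
  have hgeo : ∑' k : ℕ, (1/4 : ℝ) ^ k = (1 - 1/4)⁻¹ :=
    tsum_geometric_of_lt_one (by norm_num) (by norm_num)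
  have hs2 : ∑' k : ℕ, g (-(k+1)) = C / 3 := by
    rw [tsum_congr hg2e, tsum_mul_left, hgeo]
    ring
  have hg1e : ∀ k : ℕ, g ((k:ℤ)+1) = (C * (1/4)) * (1/4 : ℝ) ^ k := by
    intro k
    have h : ((k:ℤ)+1) ≠ 0 := by omega
    have h2 : (((k:ℤ)+1)).natAbs = k + 1 := by omega
    rw [hg]
    simp only [if_neg h, h2, pow_succ]
    ring
  have hs1 : ∑' k : ℕ, g k = C / 3 := by
    rw [Summable.tsum_eq_zero_add hg1]
    have e0 : g ((0:ℕ):ℤ) = 0 := by simp [hg]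
    have e1 : ∀ k : ℕ, g ((k+1 : ℕ) : ℤ) = (C * (1/4)) * (1/4 : ℝ) ^ k := by
      intro k
      rw [show (((k+1 : ℕ)) : ℤ) = (k:ℤ)+1 by push_cast; ring]
      exact hg1e k
    rw [e0, tsum_congr e1, tsum_mul_left, hgeo]
    ring
  have hgsum : ∑' j : ℤ, g j = 2 * C / 3 := by
    rw [tsum_of_nat_of_neg_add_one hg1 hg2, hs1, hs2]
    ring
  have hfinal : C ≤ 2 * C / 3 := by
    calc C = ‖t n₀‖ := hC
      _ = ‖R‖ := by rw [htR, norm_neg]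
      _ ≤ ∑' j : ℤ, ‖u j‖ := by rw [hRu]; exact norm_tsum_le_tsum_norm husum
      _ ≤ ∑' j : ℤ, g j := Summable.tsum_le_tsum hng husum gsum
      _ = 2 * C / 3 := hgsum
  linarith

lemma ThetaVan.false_of_quarter_le {τ z : ℂ} (hτ : 0 < τ.im) (h14 : 1/4 ≤ τ.im)
    (h : ThetaVan τ z) : False := by
  obtain ⟨h1, h2, h3, h4⟩ := h
  have d1 := jacobiTheta₂_double hτ h1 h2
  have d2 := jacobiTheta₂_double hτ h3 h4
  rw [show 2*(z + τ/2) = 2*z + 1*τ by ring] at d2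
  rw [show 2*z + 1*τ + 2*τ = 2*z + 3*τ by ring] at d2
  obtain ⟨z0, z2⟩ := d1
  obtain ⟨z1, z3⟩ := d2
  rw [show (2:ℂ)*z + 2*τ = 2*z + 2*τ by ring] at z2
  -- imaginary parts
  have him4 : (4*τ).im = 4*τ.im := by simp
  have hY : 1 ≤ (4*τ).im := by rw [him4]; linarith
  -- choose k, n₀
  set x : ℝ := (2*z).im / (4*τ.im) with hx
  set r : ℤ := round (4*x) with hr
  have hround : |4*x - r| ≤ 1/2 := abs_sub_round (4*x)
  set k : ℤ := (-r) % 4 with hk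
  have hk0 : 0 ≤ k := Int.emod_nonneg _ (by norm_num)
  have hk4 : k < 4 := Int.emod_lt_of_pos _ (by norm_num)
  have hdvd : (4:ℤ) ∣ (r + k) := by omega
  set n₀ : ℤ := -((r + k) / 4) with hn₀
  have hn4 : (4:ℤ) * n₀ = -(r + k) := by omega
  have hb : |(2*z).im + (k:ℝ)*τ.im + (n₀:ℝ) * (4*τ).im| ≤ (4*τ).im/8 := by
    rw [him4]
    have hYpos : (0:ℝ) < 4*τ.im := by linarith
    have h4n : ((4:ℤ) * n₀ : ℝ) = -((r:ℝ) + k) := by exact_mod_cast congrArg (Int.cast : ℤ → ℝ) hn4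
    push_cast at h4n
    have hxmul : (4*τ.im) * x = (2*z).im := by
      rw [hx]
      field_simp
    have he : (2*z).im + (k:ℝ)*τ.im + (n₀:ℝ) * (4*τ.im) = (4*τ.im) * ((4*x - r)/4) := by
      linear_combination τ.im * h4n - hxmul
    rw [he, abs_mul, abs_of_pos hYpos]
    calc (4*τ.im) * |(4*x - r)/4| ≤ (4*τ.im) * (1/8) := by
          refine mul_le_mul_of_nonneg_left ?_ hYpos.le
          rw [abs_div]
          rw [abs_of_pos (by norm_num : (0:ℝ) < 4)]
          linarith
      _ = (4*τ.im)/8 := by ring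
  -- case on k
  interval_cases k
  · refine jacobiTheta₂_ne_zero_of_dominant hY n₀ ?_ z0
    have : (2*z).im = (2*z).im + ((0:ℤ):ℝ)*τ.im := by push_cast; ring
    rw [← this] at hb
    exact hb
  · refine jacobiTheta₂_ne_zero_of_dominant hY n₀ ?_ z1
    have : (2*z + 1*τ).im = (2*z).im + ((1:ℤ):ℝ)*τ.im := by simp
    rw [this]
    exact hb
  · refine jacobiTheta₂_ne_zero_of_dominant hY n₀ ?_ z2
    have : (2*z + 2*τ).im = (2*z).im + ((2:ℤ):ℝ)*τ.im := by simp
    rw [this]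
    exact hb
  · refine jacobiTheta₂_ne_zero_of_dominant hY n₀ ?_ z3
    have : (2*z + 3*τ).im = (2*z).im + ((3:ℤ):ℝ)*τ.im := by simp
    rw [this]
    exact hb

lemma ThetaVan.T_int {τ z : ℂ} (h : ThetaVan τ z) (m : ℤ) :
    ThetaVan (τ + m) (z - m/2) := by
  induction m using Int.induction_on with
  | zero => simpa using h
  | succ n ih =>
    have h2 := ih.T
    have e1 : τ + ((n:ℤ):ℂ) + 1 = τ + (((n:ℤ)+1 : ℤ) : ℂ) := by push_cast; ring
    have e2 : z - ((n:ℤ):ℂ)/2 - 1/2 = z - ((((n:ℤ)+1 : ℤ)) : ℂ)/2 := by push_cast; ring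
    rw [e1, e2] at h2
    exact h2
  | pred n ih =>
    have h2 := ih.T'
    have e1 : τ + (((-n:ℤ)):ℂ) - 1 = τ + (((-(n:ℤ)-1 : ℤ)) : ℂ) := by push_cast; ring
    have e2 : z - (((-n:ℤ)):ℂ)/2 + 1/2 = z - (((-(n:ℤ)-1 : ℤ)) : ℂ)/2 := by push_cast; ring
    rw [e1, e2] at h2
    exact h2

lemma no_ThetaVan_aux : ∀ n : ℕ, ∀ τ z : ℂ, 0 < τ.im → 1/4 ≤ 2^n * τ.im →
    ThetaVan τ z → False := by
  intro n
  induction n with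
  | zero =>
    intro τ z hτ hb h
    exact h.false_of_quarter_le hτ (by simpa using hb)
  | succ n ih =>
    intro τ z hτ hb h
    rcases le_or_gt (1/4) τ.im with hc | hc
    · exact h.false_of_quarter_le hτ hc
    · set m : ℤ := round τ.re with hm
      have h1 := h.T_int (-m)
      set τ₁ : ℂ := τ + ((-m : ℤ) : ℂ) with hτ₁
      have him1 : τ₁.im = τ.im := by simp [hτ₁]
      have hre1 : |τ₁.re| ≤ 1/2 := by
        rw [hτ₁]
        simp only [add_re, intCast_re]
        push_cast
        simpa [abs_sub_comm, hm, ← sub_eq_add_neg] using abs_sub_round τ.re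
      have hτ₁im : 0 < τ₁.im := by rw [him1]; exact hτ
      have hτ₁0 : τ₁ ≠ 0 := fun h0 ↦ by simp [h0] at hτ₁im
      have h2 := h1.S hτ₁im
      have hns : normSq τ₁ ≤ 1/2 := by
        rw [normSq_apply]
        have := abs_le.mp hre1
        nlinarith [him1, hc, hτ]
      have hnspos : 0 < normSq τ₁ := normSq_pos.mpr hτ₁0
      have him2 : (-1/τ₁).im = τ₁.im / normSq τ₁ := by
        rw [neg_div, neg_im, one_div, inv_im]
        field_simp
      have him2pos : 0 < (-1/τ₁).im := by
        rw [him2]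
        positivity
      have hdouble : 2 * τ.im ≤ (-1/τ₁).im := by
        rw [him2, him1]
        rw [le_div_iff₀ hnspos]
        nlinarith
      refine ih (-1/τ₁) _ him2pos ?_ h2
      have : (2:ℝ)^n * (2 * τ.im) ≤ 2^n * (-1/τ₁).im :=
        mul_le_mul_of_nonneg_left hdouble (by positivity)
      calc (1:ℝ)/4 ≤ 2^(n+1) * τ.im := hb
        _ = 2^n * (2 * τ.im) := by ring
        _ ≤ _ := this

lemma no_ThetaVan {τ z : ℂ} (hτ : 0 < τ.im) (h : ThetaVan τ z) : False := by
  obtain ⟨n, hn⟩ := pow_unbounded_of_one_lt ((1/4)/τ.im) (by norm_num : (1:ℝ) < 2)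
  refine no_ThetaVan_aux n τ z hτ ?_ h
  rw [div_lt_iff₀ hτ] at hn
  linarith

end ThetaAux

section ThetaBridge

open Real

lemma jTheta₃_eq (z τ : ℂ) : jTheta₃ z τ = jacobiTheta₂ z τ := by
  refine tsum_congr fun n ↦ ?_
  rw [jacobiTheta₂_term]
  congr 1
  ring

lemma jTheta₄_eq (z τ : ℂ) : jTheta₄ z τ = jacobiTheta₂ (z + 1/2) τ := by
  rw [jacobiTheta₂_half_left]
  refine tsum_congr fun n ↦ ?_
  rw [jacobiTheta₂_term]
  congr 2
  ring

lemma jTheta₂_eq (z τ : ℂ) :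
    jTheta₂ z τ = cexp ((π : ℂ) * I * (τ/4 + z)) * jacobiTheta₂ (z + τ/2) τ := by
  rw [jacobiTheta₂, ← tsum_mul_left]
  refine tsum_congr fun n ↦ ?_
  rw [jacobiTheta₂_term, ← Complex.exp_add]
  congr 1
  ring

lemma jTheta₁_eq (z τ : ℂ) :
    jTheta₁ z τ = -I * cexp ((π : ℂ) * I * (τ/4 + z)) * jacobiTheta₂ (z + τ/2 + 1/2) τ := by
  rw [jacobiTheta₂_half_left, ← tsum_mul_left]
  refine tsum_congr fun n ↦ ?_
  have h : cexp ((π:ℂ) * I * (τ * ((n:ℂ) + 1/2) ^ 2 + (2 * (n:ℂ) + 1) * z)) =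
      cexp ((π:ℂ) * I * (τ/4 + z)) * cexp (2 * (π:ℂ) * I * n * (z + τ/2) + (π:ℂ) * I * n ^ 2 * τ) := by
    rw [← Complex.exp_add]
    congr 1
    ring
  rw [jacobiTheta₂_term, h]
  ring

end ThetaBridge

/-- the four Jacobi theta functions have no common zero; in particular
the vector `(θ₁(z,τ), θ₂(z,τ), θ₃(z,τ), θ₄(z,τ))` is a nonzero vector of `ℂ⁴`. -/
theorem jTheta_no_common_zero (τ : ℂ) (hτ : 0 < τ.im) (z : ℂ) :
    (¬ (jTheta₁ z τ = 0 ∧ jTheta₂ z τ = 0 ∧ jTheta₃ z τ = 0 ∧ jTheta₄ z τ = 0)) ∧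
    ![jTheta₁ z τ, jTheta₂ z τ, jTheta₃ z τ, jTheta₄ z τ] ≠ 0 := by
  have main : ¬ (jTheta₁ z τ = 0 ∧ jTheta₂ z τ = 0 ∧ jTheta₃ z τ = 0 ∧ jTheta₄ z τ = 0) := by
    rintro ⟨h1, h2, h3, h4⟩
    apply no_ThetaVan hτ (z := z)
    have e3 : jacobiTheta₂ z τ = 0 := by rw [← jTheta₃_eq]; exact h3
    have e4 : jacobiTheta₂ (z + 1/2) τ = 0 := by rw [← jTheta₄_eq]; exact h4
    have e2 : jacobiTheta₂ (z + τ/2) τ = 0 := by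
      have := jTheta₂_eq z τ
      rw [h2] at this
      rcases mul_eq_zero.mp this.symm with h | h
      · exact absurd h (Complex.exp_ne_zero _)
      · exact h
    have e1 : jacobiTheta₂ (z + τ/2 + 1/2) τ = 0 := by
      have := jTheta₁_eq z τ
      rw [h1] at this
      rcases mul_eq_zero.mp this.symm with h | h
      · exfalso
        rcases mul_eq_zero.mp h with h' | h'
        · rw [neg_eq_zero] at h'
          exact Complex.I_ne_zero h'
        · exact Complex.exp_ne_zero _ h'
      · exact h
    exact ⟨e3, e4, e2, e1⟩
  refine ⟨main, ?_⟩
  intro hv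
  apply main
  have c0 := congrFun hv 0
  have c1 := congrFun hv 1
  have c2 := congrFun hv 2
  have c3 := congrFun hv 3
  simp only [Matrix.cons_val_zero, Matrix.cons_val_one, Matrix.head_cons, Pi.zero_apply,
    Matrix.cons_val_two, Matrix.cons_val_three, Matrix.tail_cons] at c0 c1 c2 c3
  exact ⟨c0, c1, c2, c3⟩
end
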